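/- arXiv:2202.11393 — 6 statements merged into one kernel-verified Lean document; each statement's English description precedes it below -/
import Mathlib

section
/- Let X be a standard Laplace random variable (density f(x) = e^{−|x|}/2), and let q be a real-valued query with global sensitivity Δ > 0. The mechanism returning q(d) + sX is (ε, δ)-differentially private (for ε ≥ 0, 0 ≤ δ < 1) if and only if s ≥ Δ / (ε − 2 log(1 − δ)). -/
open MeasureTheory

open Real Set

noncomputable def lapf (x : ℝ) : ℝ := Real.exp (-|x|) / 2

lemma lapf_nonneg (x : ℝ) : 0 ≤ lapf x := by unfold lapf; positivity

lemma lapf_cont : Continuous lapf := by unfold lapf; fun_prop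

lemma lapf_even (x : ℝ) : lapf (-x) = lapf x := by simp [lapf]

lemma lapf_integrable : Integrable lapf := by
  have h1 : IntegrableOn lapf (Iic 0) :=
    IntegrableOn.congr_fun ((integrableOn_exp_Iic 0).div_const 2)
      (fun x hx => by simp [lapf, abs_of_nonpos (mem_Iic.mp hx)]) measurableSet_Iic
  have h2 : IntegrableOn lapf (Ioi 0) :=
    IntegrableOn.congr_fun ((exp_neg_integrableOn_Ioi 0 one_pos).div_const 2)
      (fun x hx => by simp [lapf, abs_of_pos (mem_Ioi.mp hx)]) measurableSet_Ioi
  have h := h1.union h2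
  rwa [Iic_union_Ioi, integrableOn_univ] at h

lemma lapf_shift_integrable (c : ℝ) : Integrable (fun x => lapf (x - c)) :=
  (((measurePreserving_add_right volume (-c)).integrable_comp
      lapf_cont.aestronglyMeasurable).mpr lapf_integrable).congr
    (Filter.Eventually.of_forall fun x => by simp [sub_eq_add_neg])

lemma lapf_shift_int (c : ℝ) (A : Set ℝ) :
    ∫ x in (fun y => y + c) ⁻¹' A, lapf x = ∫ y in A, lapf (y - c) := by
  have h := (measurePreserving_add_right volume c).setIntegral_preimage_emb
      (measurableEmbedding_addRight c) (fun y => lapf (y - c)) A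
  simpa using h

lemma lapf_neg_int (g : ℝ → ℝ) (A : Set ℝ) :
    ∫ x in (fun y : ℝ => -y) ⁻¹' A, g (-x) = ∫ y in A, g y := by
  have h := (Measure.measurePreserving_neg (volume : Measure ℝ)).setIntegral_preimage_emb
      (MeasurableEquiv.neg ℝ).measurableEmbedding g A
  simpa using h

lemma lapf_meas_eq (A : Set ℝ) (hA : MeasurableSet A) :
    ((volume.withDensity fun x => ENNReal.ofReal (Real.exp (-|x|) / 2)) A).toReal
      = ∫ x in A, lapf x := by
  rw [withDensity_apply _ hA]
  rw [integral_eq_lintegral_of_nonneg_ae (Filter.Eventually.of_forall lapf_nonneg)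
    lapf_cont.aestronglyMeasurable.restrict]
  rfl

lemma lapf_tail_nonneg {b : ℝ} (hb : 0 ≤ b) : ∫ x in Ioi b, lapf x = Real.exp (-b) / 2 := by
  rw [setIntegral_congr_fun measurableSet_Ioi
    (g := fun x => Real.exp (-x) / 2)
    (fun x hx => by simp [lapf, abs_of_pos (lt_of_le_of_lt hb (mem_Ioi.mp hx))])]
  rw [integral_div, integral_exp_neg_Ioi]

lemma lapf_tail_neg {b : ℝ} (hb : b ≤ 0) : ∫ x in Ioi b, lapf x = 1 - Real.exp b / 2 := by
  rw [← Ioc_union_Ioi_eq_Ioi hb,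
    setIntegral_union (Ioc_disjoint_Ioi le_rfl) measurableSet_Ioi
      lapf_integrable.integrableOn lapf_integrable.integrableOn]
  have h1 : ∫ x in Ioc b 0, lapf x = (1 - Real.exp b) / 2 := by
    rw [setIntegral_congr_fun measurableSet_Ioc
      (g := fun x => Real.exp x / 2)
      (fun x hx => by simp [lapf, abs_of_nonpos (mem_Ioc.mp hx).2])]
    rw [integral_div, ← intervalIntegral.integral_of_le hb, integral_exp]
    simp
  rw [h1, lapf_tail_nonneg le_rfl]
  simp; ring

lemma lapf_pt_of {ε c x : ℝ} (h : |x| - |x - c| ≤ ε) :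
    lapf (x - c) ≤ Real.exp ε * lapf x := by
  have h2 := Real.exp_le_exp.mpr (show -|x - c| ≤ ε + -|x| by linarith)
  rw [Real.exp_add] at h2
  unfold lapf
  rw [← mul_div_assoc]
  linarith

lemma lapf_pt {ε c x : ℝ} (hε : 0 ≤ ε) (hc : 0 ≤ c) (hx : x ≤ (ε + c) / 2) :
    lapf (x - c) ≤ Real.exp ε * lapf x := by
  apply lapf_pt_of
  rcases abs_cases x with ⟨h1, h2⟩ | ⟨h1, h2⟩ <;>
    rcases abs_cases (x - c) with ⟨h3, h4⟩ | ⟨h3, h4⟩ <;> linarith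

lemma lapf_pt' {ε c x : ℝ} (hε : 0 ≤ ε) (hc : ε < c) (hx : (ε + c) / 2 ≤ x) :
    Real.exp ε * lapf x ≤ lapf (x - c) := by
  have h : ε + -|x| ≤ -|x - c| := by
    rcases abs_cases x with ⟨h1, h2⟩ | ⟨h1, h2⟩ <;>
      rcases abs_cases (x - c) with ⟨h3, h4⟩ | ⟨h3, h4⟩ <;> linarith
  have h2 := Real.exp_le_exp.mpr h
  rw [Real.exp_add] at h2
  unfold lapf
  rw [← mul_div_assoc]
  linarith

lemma lapf_key {ε δ : ℝ} (hε : 0 ≤ ε) (hδ0 : 0 ≤ δ) (hδ1 : δ < 1) {c : ℝ} (hc0 : 0 ≤ c)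
    (hc : c ≤ ε - 2 * Real.log (1 - δ)) (A : Set ℝ) (hA : MeasurableSet A) :
    ∫ x in A, lapf (x - c) ≤ Real.exp ε * (∫ x in A, lapf x) + δ := by
  have hint : IntegrableOn (fun x => lapf (x - c)) A := (lapf_shift_integrable c).integrableOn
  have hintf : IntegrableOn lapf A := lapf_integrable.integrableOn
  have hintef : IntegrableOn (fun x => Real.exp ε * lapf x) A :=
    (lapf_integrable.const_mul _).integrableOn
  rcases le_or_gt c ε with hce | hce
  · have h : ∫ x in A, lapf (x - c) ≤ ∫ x in A, Real.exp ε * lapf x :=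
      setIntegral_mono_on hint hintef hA (fun x _ => by
        apply lapf_pt_of
        have h1 := abs_sub_abs_le_abs_sub x (x - c)
        simp only [sub_sub_cancel] at h1
        rw [abs_of_nonneg hc0] at h1
        linarith)
    have h2 : ∫ x in A, Real.exp ε * lapf x = Real.exp ε * ∫ x in A, lapf x :=
      integral_const_mul _ _
    linarith
  · set a := (ε + c) / 2 with ha
    have ha0 : 0 ≤ a := by rw [ha]; linarith
    have hE : MeasurableSet (Ioi a) := measurableSet_Ioi
    have hintE : IntegrableOn (fun x => lapf (x - c)) (Ioi a) :=
      (lapf_shift_integrable c).integrableOn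
    have hintefE : IntegrableOn (fun x => Real.exp ε * lapf x) (Ioi a) :=
      (lapf_integrable.const_mul _).integrableOn
    have key0 : ∫ x in Ioi a, (lapf (x - c) - Real.exp ε * lapf x) ≤ δ := by
      rw [integral_sub hintE hintefE]
      have h1 : ∫ x in Ioi a, lapf (x - c) = 1 - Real.exp ((ε - c) / 2) / 2 := by
        have h := lapf_shift_int c (Ioi a)
        rw [preimage_add_const_Ioi] at h
        rw [← h, lapf_tail_neg (by rw [ha]; linarith : a - c ≤ 0)]
        rw [show a - c = (ε - c) / 2 by rw [ha]; ring]
      have h2 : ∫ x in Ioi a, lapf x = Real.exp (-a) / 2 := lapf_tail_nonneg ha0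
      have h3 : Real.exp ε * (Real.exp (-a) / 2) = Real.exp ((ε - c) / 2) / 2 := by
        rw [← mul_div_assoc, ← Real.exp_add, show ε + -a = (ε - c) / 2 by rw [ha]; ring]
      rw [h1, integral_const_mul, h2, h3]
      have h4 : 1 - δ ≤ Real.exp ((ε - c) / 2) := by
        calc 1 - δ = Real.exp (Real.log (1 - δ)) :=
              (Real.exp_log (by linarith : (0:ℝ) < 1 - δ)).symm
          _ ≤ _ := Real.exp_le_exp.mpr (by linarith)
      linarith
    have hsplit : (∫ x in A ∩ Ioi a, lapf (x - c)) + (∫ x in A \ Ioi a, lapf (x - c))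
        = ∫ x in A, lapf (x - c) := integral_inter_add_diff hE hint
    have hsplit2 : (∫ x in A ∩ Ioi a, lapf x) + (∫ x in A \ Ioi a, lapf x)
        = ∫ x in A, lapf x := integral_inter_add_diff hE hintf
    have hdiff : ∫ x in A \ Ioi a, lapf (x - c) ≤ ∫ x in A \ Ioi a, Real.exp ε * lapf x :=
      setIntegral_mono_on (hint.mono_set diff_subset) (hintef.mono_set diff_subset)
        (hA.diff hE) (fun x hx => lapf_pt hε hc0
          (by simpa using not_lt.mp (fun hcon => hx.2 hcon)))
    have hdiff2 : ∫ x in A \ Ioi a, Real.exp ε * lapf x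
        = Real.exp ε * ∫ x in A \ Ioi a, lapf x := integral_const_mul _ _
    have e1 : ∫ x in A ∩ Ioi a, (lapf (x - c) - Real.exp ε * lapf x)
        = (∫ x in A ∩ Ioi a, lapf (x - c)) - ∫ x in A ∩ Ioi a, Real.exp ε * lapf x :=
      integral_sub (hintE.mono_set inter_subset_right) (hintefE.mono_set inter_subset_right)
    have e2 : ∫ x in A ∩ Ioi a, Real.exp ε * lapf x
        = Real.exp ε * ∫ x in A ∩ Ioi a, lapf x := integral_const_mul _ _
    have hmono : ∫ x in A ∩ Ioi a, (lapf (x - c) - Real.exp ε * lapf x)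
        ≤ ∫ x in Ioi a, (lapf (x - c) - Real.exp ε * lapf x) := by
      apply setIntegral_mono_set (hintE.sub hintefE)
      · filter_upwards [ae_restrict_mem hE] with x hx
        exact sub_nonneg.mpr (lapf_pt' hε hce (le_of_lt hx))
      · exact HasSubset.Subset.eventuallyLE inter_subset_right
    have hmul : Real.exp ε * (∫ x in A ∩ Ioi a, lapf x) + Real.exp ε * ∫ x in A \ Ioi a, lapf x
        = Real.exp ε * ∫ x in A, lapf x := by rw [← mul_add, hsplit2]
    linarith

lemma lapf_key' {ε δ : ℝ} (hε : 0 ≤ ε) (hδ0 : 0 ≤ δ) (hδ1 : δ < 1) {c : ℝ}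
    (hc : |c| ≤ ε - 2 * Real.log (1 - δ)) (A : Set ℝ) (hA : MeasurableSet A) :
    ∫ x in A, lapf (x - c) ≤ Real.exp ε * (∫ x in A, lapf x) + δ := by
  rcases le_total 0 c with h0 | h0
  · exact lapf_key hε hδ0 hδ1 h0 (by rwa [abs_of_nonneg h0] at hc) A hA
  · have hA' : MeasurableSet ((fun y : ℝ => -y) ⁻¹' A) := hA.preimage measurable_neg
    have h := lapf_key hε hδ0 hδ1 (neg_nonneg.mpr h0)
      (by rwa [abs_of_nonpos h0] at hc) _ hA'
    have e1 : ∫ x in (fun y : ℝ => -y) ⁻¹' A, lapf (x - -c) = ∫ y in A, lapf (y - c) := by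
      rw [← lapf_neg_int (fun y => lapf (y - c)) A]
      exact setIntegral_congr_fun hA' (fun x _ => by
        rw [show x - -c = -(-x - c) by ring, lapf_even])
    have e2 : ∫ x in (fun y : ℝ => -y) ⁻¹' A, lapf x = ∫ y in A, lapf y := by
      rw [← lapf_neg_int lapf A]
      exact setIntegral_congr_fun hA' (fun x _ => (lapf_even x).symm)
    rw [e1, e2] at h
    exact h


/-- The Laplace mechanism with scale `s` is `(ε, δ)`-differentially private
for a query of global sensitivity `Δ` iff `s ≥ Δ / (ε − 2 log(1 − δ))`
(stated equivalently, for `s > 0`, as `Δ / s ≤ ε − 2 log(1 − δ)`). -/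
theorem laplace_mechanism (Δ ε δ s : ℝ) (hΔ : 0 < Δ) (hε : 0 ≤ ε)
    (hδ0 : 0 ≤ δ) (hδ1 : δ < 1) (hs : 0 < s) :
    (∀ t : ℝ, |t| ≤ Δ → ∀ S : Set ℝ, MeasurableSet S →
        ((volume.withDensity fun x => ENNReal.ofReal (Real.exp (-|x|) / 2))
            {x | t + s * x ∈ S}).toReal ≤
          Real.exp ε *
            ((volume.withDensity fun x => ENNReal.ofReal (Real.exp (-|x|) / 2))
              {x | s * x ∈ S}).toReal + δ) ↔
      Δ / s ≤ ε - 2 * Real.log (1 - δ) := by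
  constructor
  · intro h
    rcases le_or_gt (Δ / s) ε with hcε | hcε
    · have hlog : Real.log (1 - δ) ≤ 0 := Real.log_nonpos (by linarith) (by linarith)
      linarith
    · set c := Δ / s with hcdef
      set a := (ε + c) / 2 with hadef
      have hc0 : 0 < c := div_pos hΔ hs
      have ha0 : 0 ≤ a := by rw [hadef]; linarith
      have h1 := h Δ (le_of_eq (abs_of_pos hΔ)) (Ici (s * a)) measurableSet_Ici
      have hset1 : {x : ℝ | s * x ∈ Ici (s * a)} = Ici a := by
        ext x; simp [mul_le_mul_iff_right₀ hs]
      have hΔs : s * c = Δ := by rw [hcdef, mul_div_cancel₀ _ (ne_of_gt hs)]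
      have hset2 : {x : ℝ | Δ + s * x ∈ Ici (s * a)} = Ici (a - c) := by
        ext x
        simp only [mem_setOf_eq, mem_Ici]
        rw [← mul_le_mul_iff_right₀ hs (b := a - c) (c := x), mul_sub, hΔs]
        constructor <;> intro <;> linarith
      rw [hset1, hset2] at h1
      rw [lapf_meas_eq _ measurableSet_Ici, lapf_meas_eq _ measurableSet_Ici] at h1
      rw [integral_Ici_eq_integral_Ioi, integral_Ici_eq_integral_Ioi] at h1
      rw [lapf_tail_nonneg ha0, lapf_tail_neg (by rw [hadef]; linarith : a - c ≤ 0)] at h1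
      have h3 : Real.exp ε * (Real.exp (-a) / 2) = Real.exp (a - c) / 2 := by
        rw [← mul_div_assoc, ← Real.exp_add, show ε + -a = a - c by rw [hadef]; ring]
      rw [h3] at h1
      have h4 : Real.log (1 - δ) ≤ a - c := by
        rw [Real.log_le_iff_le_exp (by linarith)]
        linarith
      rw [hadef] at h4
      linarith
  · intro hK t ht S hS
    set c := t / s with hcdef
    have hA : MeasurableSet {x : ℝ | s * x ∈ S} := (measurable_id.const_mul s) hS
    have hA' : MeasurableSet ((fun y => y + c) ⁻¹' {x : ℝ | s * x ∈ S}) :=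
      hA.preimage (measurable_add_const c)
    have hset : {x : ℝ | t + s * x ∈ S} = (fun y => y + c) ⁻¹' {x : ℝ | s * x ∈ S} := by
      ext x
      have hsc : s * (x + c) = t + s * x := by
        rw [hcdef, mul_add, mul_div_cancel₀ _ (ne_of_gt hs)]; ring
      simp only [mem_setOf_eq, mem_preimage, hsc]
    rw [hset, lapf_meas_eq _ hA', lapf_meas_eq _ hA, lapf_shift_int c]
    apply lapf_key' hε hδ0 hδ1 _ _ hA
    rw [hcdef, abs_div, abs_of_pos hs]
    calc |t| / s ≤ Δ / s := by gcongr
      _ ≤ _ := hK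
end

section
/- Let X be a standard Logistic random variable (density f(x) = e^{−x}/(1 + e^{−x})²), and let q be a real-valued query with global sensitivity Δ > 0. The mechanism returning q(d) + sX is (ε, δ)-differentially private (for ε ≥ 0, 0 ≤ δ < 1) if and only if s ≥ Δ / (2 log((e^{ε/2} + √(δ(e^ε + δ − 1))) / (1 − δ))). -/
open MeasureTheory Real Set Filter Topology

namespace LogisticAux




noncomputable def f (x : ℝ) : ℝ := Real.exp (-x) / (1 + Real.exp (-x)) ^ 2
noncomputable def F (x : ℝ) : ℝ := (1 + Real.exp (-x))⁻¹

lemma f_pos (x : ℝ) : 0 < f x := by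
  have h := Real.exp_pos (-x); unfold f; positivity

lemma f_eq (x : ℝ) : f x = Real.exp x / (1 + Real.exp x) ^ 2 := by
  unfold f
  rw [Real.exp_neg]
  have h := Real.exp_pos x
  rw [div_eq_div_iff (by positivity) (by positivity)]
  field_simp
  ring

lemma f_neg (x : ℝ) : f (-x) = f x := by
  rw [f_eq x]; unfold f; rw [neg_neg]

lemma f_cont : Continuous f := by
  unfold f
  apply Continuous.div (by continuity) (by continuity)
  intro x; have := Real.exp_pos (-x); positivity

lemma hasDerivAt_F (x : ℝ) : HasDerivAt F (f x) x := by
  have h1 : HasDerivAt (fun x : ℝ => 1 + Real.exp (-x)) (-Real.exp (-x)) x := by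
    have h := ((hasDerivAt_id x).neg.exp).const_add (1 : ℝ)
    simpa using h
  have h2 := h1.inv (by have := Real.exp_pos (-x); positivity)
  have e : f x = -(-Real.exp (-x)) / (1 + Real.exp (-x)) ^ 2 := by
    unfold f
    rw [neg_neg]
  rw [e]; exact h2

lemma tendsto_F_atTop : Tendsto F atTop (𝓝 1) := by
  have h : Tendsto (fun x : ℝ => 1 + Real.exp (-x)) atTop (𝓝 1) := by
    have := tendsto_const_nhds (α := ℝ) (x := (1:ℝ)) (f := atTop (α := ℝ))
    simpa using this.add Real.tendsto_exp_neg_atTop_nhds_zero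
  have h2 := h.inv₀ (by norm_num)
  rw [inv_one] at h2; exact h2

lemma f_int : Integrable f := by
  have h1 : IntegrableOn f (Ioi (0:ℝ)) := by
    refine Integrable.mono (exp_neg_integrableOn_Ioi 0 one_pos)
      f_cont.aestronglyMeasurable.restrict ?_
    refine ae_of_all _ fun x => ?_
    rw [Real.norm_eq_abs, Real.norm_eq_abs, abs_of_nonneg (f_pos x).le,
      abs_of_nonneg (Real.exp_pos _).le, neg_one_mul]
    unfold f
    have h := Real.exp_pos (-x)
    rw [div_le_iff₀ (by positivity)]
    nlinarith [mul_pos h h, mul_pos (mul_pos h h) h]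
  have h2 : IntegrableOn f (Iic (0:ℝ)) := by
    refine Integrable.mono (integrableOn_exp_Iic 0)
      f_cont.aestronglyMeasurable.restrict ?_
    refine ae_of_all _ fun x => ?_
    rw [Real.norm_eq_abs, Real.norm_eq_abs, abs_of_nonneg (f_pos x).le,
      abs_of_nonneg (Real.exp_pos _).le, f_eq]
    have h := Real.exp_pos x
    rw [div_le_iff₀ (by positivity)]
    nlinarith [mul_pos h h, mul_pos (mul_pos h h) h]
  have h3 := h2.union h1
  rwa [Iic_union_Ioi, integrableOn_univ] at h3

lemma f_shift_int (c : ℝ) : Integrable (fun y => f (y - c)) := f_int.comp_sub_right c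



lemma F_def (x : ℝ) : F x = (1 + Real.exp (-x))⁻¹ := rfl


noncomputable def μL : Measure ℝ := volume.withDensity fun x => ENNReal.ofReal (f x)

lemma F_cont : Continuous F := by
  have : Continuous fun x : ℝ => (1 + Real.exp (-x))⁻¹ := by
    apply Continuous.inv₀ (by continuity)
    intro x; have := Real.exp_pos (-x); positivity
  have he : F = fun x : ℝ => (1 + Real.exp (-x))⁻¹ := funext F_def
  rwa [he]

lemma μL_toReal {S : Set ℝ} (hS : MeasurableSet S) : (μL S).toReal = ∫ x in S, f x := by
  rw [μL, withDensity_apply _ hS,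
    ← ofReal_integral_eq_lintegral_ofReal f_int.integrableOn (ae_of_all _ fun x => (f_pos x).le)]
  exact ENNReal.toReal_ofReal (setIntegral_nonneg hS fun x _ => (f_pos x).le)

lemma μL_shift {T : Set ℝ} (hT : MeasurableSet T) (c : ℝ) :
    (μL {x | x + c ∈ T}).toReal = ∫ y in T, f (y - c) := by
  have hmeas : MeasurableSet {x : ℝ | x + c ∈ T} := (measurable_add_const c) hT
  rw [μL_toReal hmeas, ← integral_indicator hmeas, ← integral_indicator hT,
    ← integral_add_right_eq_self (T.indicator fun y => f (y - c)) c]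
  congr 1
  ext x
  by_cases hx : x + c ∈ T
  · simp [Set.indicator, hx]
  · simp [Set.indicator, hx]

lemma setIntegral_comp_neg (T : Set ℝ) (g : ℝ → ℝ) (hT : MeasurableSet T) :
    ∫ y in T, g y = ∫ y in Neg.neg ⁻¹' T, g (-y) := by
  rw [← integral_indicator hT, ← integral_indicator (hT.preimage measurable_neg)]
  have h := (integral_neg_eq_self (T.indicator g) (volume : Measure ℝ)).symm
  rw [h]
  refine congrArg _ (funext fun x => ?_)
  by_cases hx : -x ∈ T
  · simp [Set.indicator, hx]
  · simp [Set.indicator, hx]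

lemma integral_f_Ioi (c r : ℝ) :
    ∫ y in Ioi r, f (y - c) = (Real.exp (r - c) + 1)⁻¹ := by
  have hd : ∀ x ∈ Ioi r, HasDerivAt (fun y => F (y - c)) (f (x - c)) x := by
    intro x _
    have h := (hasDerivAt_F (x - c)).comp x ((hasDerivAt_id x).sub_const c)
    simpa [Function.comp_def] using h
  have hcont : ContinuousWithinAt (fun y => F (y - c)) (Ici r) r :=
    (F_cont.comp (continuous_id.sub continuous_const)).continuousWithinAt
  have htend : Tendsto (fun y => F (y - c)) atTop (𝓝 1) := by
    apply tendsto_F_atTop.comp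
    simpa [sub_eq_add_neg] using tendsto_atTop_add_const_right atTop (-c) tendsto_id
  have hint : IntegrableOn (fun y => f (y - c)) (Ioi r) := (f_shift_int c).integrableOn
  rw [integral_Ioi_of_hasDerivAt_of_tendsto hcont hd hint htend, F_def]
  have h := Real.exp_pos (r - c)
  rw [Real.exp_neg]
  field_simp
  ring

lemma integral_f_Ioi0 (r : ℝ) : ∫ y in Ioi r, f y = (Real.exp r + 1)⁻¹ := by
  have h := integral_f_Ioi 0 r
  simpa using h

lemma f_cmp_le {c E y : ℝ}
    (h : Real.exp (c/2) * (1 + Real.exp y) ≤ Real.exp (E/2) * (Real.exp c + Real.exp y)) :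
    f (y - c) ≤ Real.exp E * f y := by
  rw [f_eq, f_eq, Real.exp_sub]
  have hu : 0 < Real.exp y := Real.exp_pos y
  have hA : 0 < Real.exp c := Real.exp_pos c
  have ha2 : Real.exp (c/2) ^ 2 = Real.exp c := by
    rw [sq, ← Real.exp_add]; norm_num
  have hb2 : Real.exp (E/2) ^ 2 = Real.exp E := by
    rw [sq, ← Real.exp_add]; norm_num
  set u := Real.exp y
  set A := Real.exp c
  have hlhs : u / A / (1 + u / A) ^ 2 = A * u / (A + u) ^ 2 := by
    field_simp
  rw [hlhs, mul_div_assoc' (Real.exp E) u _, div_le_div_iff₀ (by positivity) (by positivity)]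
  have key : (Real.exp (c/2) * (1 + u)) ^ 2 ≤ (Real.exp (E/2) * (A + u)) ^ 2 := by
    have h1 : 0 ≤ Real.exp (c/2) * (1 + u) := by positivity
    exact pow_le_pow_left₀ h1 h 2
  have e1 : (Real.exp (c/2) * (1 + u)) ^ 2 = A * (1 + u) ^ 2 := by rw [mul_pow, ha2]
  have e2 : (Real.exp (E/2) * (A + u)) ^ 2 = Real.exp E * (A + u) ^ 2 := by rw [mul_pow, hb2]
  have key2 : A * (1 + u) ^ 2 ≤ Real.exp E * (A + u) ^ 2 := by
    rw [← e1, ← e2]; exact key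
  nlinarith [mul_le_mul_of_nonneg_left key2 hu.le]

lemma f_cmp_ge {c E y : ℝ}
    (h : Real.exp (E/2) * (Real.exp c + Real.exp y) ≤ Real.exp (c/2) * (1 + Real.exp y)) :
    Real.exp E * f y ≤ f (y - c) := by
  rw [f_eq, f_eq, Real.exp_sub]
  have hu : 0 < Real.exp y := Real.exp_pos y
  have hA : 0 < Real.exp c := Real.exp_pos c
  have ha2 : Real.exp (c/2) ^ 2 = Real.exp c := by
    rw [sq, ← Real.exp_add]; norm_num
  have hb2 : Real.exp (E/2) ^ 2 = Real.exp E := by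
    rw [sq, ← Real.exp_add]; norm_num
  set u := Real.exp y
  set A := Real.exp c
  have hlhs : u / A / (1 + u / A) ^ 2 = A * u / (A + u) ^ 2 := by
    field_simp
  rw [hlhs, mul_div_assoc' (Real.exp E) u _, div_le_div_iff₀ (by positivity) (by positivity)]
  have key : (Real.exp (E/2) * (A + u)) ^ 2 ≤ (Real.exp (c/2) * (1 + u)) ^ 2 := by
    have h1 : 0 ≤ Real.exp (E/2) * (A + u) := by positivity
    exact pow_le_pow_left₀ h1 h 2
  have e1 : (Real.exp (c/2) * (1 + u)) ^ 2 = A * (1 + u) ^ 2 := by rw [mul_pow, ha2]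
  have e2 : (Real.exp (E/2) * (A + u)) ^ 2 = Real.exp E * (A + u) ^ 2 := by rw [mul_pow, hb2]
  have key2 : Real.exp E * (A + u) ^ 2 ≤ A * (1 + u) ^ 2 := by
    rw [← e1, ← e2]; exact key
  nlinarith [mul_le_mul_of_nonneg_left key2 hu.le]




lemma bound_easy {ε c : ℝ} (hc : 0 ≤ c) (hcε : c ≤ ε) {T : Set ℝ} (hT : MeasurableSet T) :
    ∫ y in T, f (y - c) ≤ Real.exp ε * ∫ y in T, f y := by
  rw [← integral_const_mul]
  refine setIntegral_mono ((f_shift_int c).integrableOn) ((f_int.const_mul _).integrableOn) ?_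
  intro y
  refine f_cmp_le ?_
  have h1 : Real.exp (c/2) ≤ Real.exp (ε/2) := Real.exp_le_exp.2 (by linarith)
  have h2 : (1:ℝ) ≤ Real.exp c := Real.one_le_exp hc
  have h3 : 0 < Real.exp y := Real.exp_pos y
  have h4 : 0 < Real.exp (c/2) := Real.exp_pos _
  nlinarith [mul_le_mul_of_nonneg_right h1 h3.le]

lemma bound_hard {ε δ c : ℝ} (hε : 0 ≤ ε) (hc : ε < c) (hδ0 : 0 ≤ δ)
    (hQ : (Real.exp (c/2) - Real.exp (ε/2))^2 ≤ δ * ((Real.exp (c/2))^2 - 1))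
    {T : Set ℝ} (hT : MeasurableSet T) :
    ∫ y in T, f (y - c) ≤ Real.exp ε * (∫ y in T, f y) + δ := by
  set a := Real.exp (c/2) with ha
  set b := Real.exp (ε/2) with hb
  have hb1 : (1:ℝ) ≤ b := Real.one_le_exp (by linarith)
  have hba : b < a := Real.exp_lt_exp.2 (by linarith)
  have ha1 : (1:ℝ) < a := lt_of_le_of_lt hb1 hba
  have hab1 : (1:ℝ) < a * b := by nlinarith
  have ha2 : a ^ 2 = Real.exp c := by rw [ha, sq, ← Real.exp_add]; norm_num
  have hb2 : b ^ 2 = Real.exp ε := by rw [hb, sq, ← Real.exp_add]; norm_num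
  set u := a * (a * b - 1) / (a - b) with hu
  have hu0 : 0 < u := by
    apply div_pos (by nlinarith) (by linarith)
  set xc := Real.log u with hxc
  have hexc : Real.exp xc = u := Real.exp_log hu0
  set g := fun y => f (y - c) - Real.exp ε * f y with hg
  have hgint : Integrable g := (f_shift_int c).sub (f_int.const_mul _)
  have hne : a - b ≠ 0 := by linarith
  have hane : a ≠ 0 := by linarith
  have h21 : a^2 - 1 ≠ 0 := by nlinarith
  have hucl : u * (a - b) = a * (a * b - 1) := by
    rw [hu]; field_simp
  -- pointwise facts
  have hpt_le : ∀ y : ℝ, y ≤ xc → f (y - c) ≤ Real.exp ε * f y := by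
    intro y hy
    refine f_cmp_le ?_
    rw [← ha, ← hb, ← ha2]
    have hv : Real.exp y ≤ u := by
      rw [← hexc]; exact Real.exp_le_exp.2 hy
    nlinarith [mul_le_mul_of_nonneg_right hv (by linarith : (0:ℝ) ≤ a - b)]
  have hpt_ge : ∀ y : ℝ, xc ≤ y → Real.exp ε * f y ≤ f (y - c) := by
    intro y hy
    refine f_cmp_ge ?_
    rw [← ha, ← hb, ← ha2]
    have hv : u ≤ Real.exp y := by
      rw [← hexc]; exact Real.exp_le_exp.2 hy
    nlinarith [mul_le_mul_of_nonneg_right hv (by linarith : (0:ℝ) ≤ a - b)]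
  -- step 1 : ∫_T g ≤ ∫_{Ioi xc} g
  have step1 : ∫ y in T, g y ≤ ∫ y in Ioi xc, g y := by
    have hsplit : (∫ y in T ∩ Ioi xc, g y) + ∫ y in T \ Ioi xc, g y = ∫ y in T, g y :=
      integral_inter_add_diff measurableSet_Ioi hgint.integrableOn
    have h2 : ∫ y in T \ Ioi xc, g y ≤ 0 := by
      refine setIntegral_nonpos (hT.diff measurableSet_Ioi) fun y hy => ?_
      have : y ≤ xc := not_lt.1 hy.2
      simpa [hg] using sub_nonpos.2 (hpt_le y this)
    have h3 : ∫ y in T ∩ Ioi xc, g y ≤ ∫ y in Ioi xc, g y := by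
      refine setIntegral_mono_set hgint.integrableOn ?_ ?_
      · filter_upwards [ae_restrict_mem measurableSet_Ioi] with y hy
        exact sub_nonneg.2 (hpt_ge y (le_of_lt hy))
      · exact HasSubset.Subset.eventuallyLE inter_subset_right
    linarith
  -- value of ∫_{Ioi xc} g
  have hval : ∫ y in Ioi xc, g y
      = (Real.exp (xc - c) + 1)⁻¹ - Real.exp ε * (Real.exp xc + 1)⁻¹ := by
    rw [hg, integral_sub ((f_shift_int c).integrableOn) ((f_int.const_mul _).integrableOn),
      integral_const_mul, integral_f_Ioi, integral_f_Ioi0]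
  have hb0 : b ≠ 0 := by linarith
  have hδval : (Real.exp (xc - c) + 1)⁻¹ - Real.exp ε * (Real.exp xc + 1)⁻¹
      = (a - b)^2 / (a^2 - 1) := by
    have s1 : Real.exp (xc - c) + 1 = (a^2 - 1)/(a*(a - b)) := by
      rw [Real.exp_sub, hexc, ← ha2, hu]
      field_simp
      ring
    have s2 : Real.exp xc + 1 = b*(a^2 - 1)/(a - b) := by
      rw [hexc, hu]
      field_simp
      ring
    rw [s1, s2, ← hb2, inv_div, inv_div]
    field_simp
  have hfin : ∫ y in Ioi xc, g y ≤ δ := by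
    rw [hval, hδval, div_le_iff₀ (by nlinarith : (0:ℝ) < a^2 - 1)]
    linarith [hQ]
  have hTg : ∫ y in T, g y
      = (∫ y in T, f (y - c)) - Real.exp ε * ∫ y in T, f y := by
    rw [hg, integral_sub ((f_shift_int c).integrableOn) ((f_int.const_mul _).integrableOn),
      integral_const_mul]
  have hfinal := step1.trans hfin
  rw [hTg] at hfinal
  linarith



lemma f_def (x : ℝ) : f x = Real.exp (-x) / (1 + Real.exp (-x)) ^ 2 := rfl

end LogisticAux


open LogisticAux

set_option maxHeartbeats 2000000 in
/-- The Logistic mechanism with scale `s` is `(ε, δ)`-differentially private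
for a query of global sensitivity `Δ` iff
`s ≥ Δ / (2 log((e^{ε/2} + √(δ(e^ε + δ − 1))) / (1 − δ)))`
(stated equivalently, for `s > 0`, as `Δ / s ≤ 2 log(...)`). -/
theorem logistic_mechanism (Δ ε δ s : ℝ) (hΔ : 0 < Δ) (hε : 0 ≤ ε)
    (hδ0 : 0 ≤ δ) (hδ1 : δ < 1) (hs : 0 < s) :
    (∀ t : ℝ, |t| ≤ Δ → ∀ S : Set ℝ, MeasurableSet S →
        ((volume.withDensity fun x =>
              ENNReal.ofReal (Real.exp (-x) / (1 + Real.exp (-x)) ^ 2))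
            {x | t + s * x ∈ S}).toReal ≤
          Real.exp ε *
            ((volume.withDensity fun x =>
                ENNReal.ofReal (Real.exp (-x) / (1 + Real.exp (-x)) ^ 2))
              {x | s * x ∈ S}).toReal + δ) ↔
      Δ / s ≤ 2 * Real.log
        ((Real.exp (ε / 2) + Real.sqrt (δ * (Real.exp ε + δ - 1))) / (1 - δ)) := by
  have hμ : (volume.withDensity fun x =>
      ENNReal.ofReal (Real.exp (-x) / (1 + Real.exp (-x)) ^ 2)) = μL := by
    rfl
  simp only [hμ]
  set b : ℝ := Real.exp (ε / 2) with hbdef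
  set D : ℝ := δ * (Real.exp ε + δ - 1) with hDdef
  set A : ℝ := (b + Real.sqrt D) / (1 - δ) with hAdef
  have hb1 : (1:ℝ) ≤ b := Real.one_le_exp (by linarith)
  have hb2 : b ^ 2 = Real.exp ε := by rw [hbdef, sq, ← Real.exp_add]; norm_num
  have hD0 : 0 ≤ D := by
    rw [hDdef, ← hb2]
    exact mul_nonneg hδ0 (by nlinarith)
  have h1δ : (0:ℝ) < 1 - δ := by linarith
  have hsq : Real.sqrt D ^ 2 = D := Real.sq_sqrt hD0
  have hsqnn : 0 ≤ Real.sqrt D := Real.sqrt_nonneg D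
  have hA0 : 0 < A := by
    rw [hAdef]
    apply div_pos (by linarith) h1δ
  have hbA : b ≤ A := by
    rw [hAdef, le_div_iff₀ h1δ]
    nlinarith
  have hδb : δ * b ≤ Real.sqrt D := by
    apply Real.le_sqrt_of_sq_le
    rw [hDdef, ← hb2]
    nlinarith [mul_nonneg (mul_nonneg hδ0 h1δ.le) (by nlinarith : (0:ℝ) ≤ b^2 - 1)]
  clear_value b D A
  constructor
  · -- forward
    intro H
    rcases le_or_gt (Δ / s) ε with hcε | hcε
    · calc Δ / s ≤ ε := hcε
        _ = 2 * Real.log b := by rw [hbdef, Real.log_exp]; ring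
        _ ≤ 2 * Real.log A := by
          have := Real.log_le_log (by positivity : (0:ℝ) < b) hbA
          linarith
    · -- hard case
      set c := Δ / s with hcdef
      have hc0 : 0 < c := by positivity
      set a : ℝ := Real.exp (c / 2) with hadef
      have hba : b < a := by rw [hbdef, hadef]; exact Real.exp_lt_exp.2 (by linarith)
      have ha1 : (1:ℝ) < a := lt_of_le_of_lt hb1 hba
      have ha2 : a ^ 2 = Real.exp c := by rw [hadef, sq, ← Real.exp_add]; norm_num
      clear_value a
      set u : ℝ := a * (a * b - 1) / (a - b) with hudef
      have hu0 : 0 < u := by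
        rw [hudef]
        apply div_pos (by nlinarith) (by linarith)
      clear_value u
      set xc := Real.log u with hxcdef
      have hexc : Real.exp xc = u := by rw [hxcdef]; exact Real.exp_log hu0
      clear_value xc
      have key := H Δ (by rw [abs_of_pos hΔ]) (Ioi (s * xc)) measurableSet_Ioi
      have hset1 : {x : ℝ | Δ + s * x ∈ Ioi (s * xc)} = Ioi (xc - c) := by
        ext x
        simp only [mem_setOf_eq, mem_Ioi]
        have hsd : s * (Δ / s) = Δ := mul_div_cancel₀ _ (ne_of_gt hs)
        constructor
        · intro hx
          by_contra hcon
          push_neg at hcon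
          have := mul_le_mul_of_nonneg_left hcon hs.le
          rw [mul_sub, hsd] at this
          linarith
        · intro hx
          have := mul_lt_mul_of_pos_left hx hs
          rw [mul_sub, hsd] at this
          linarith
      have hset2 : {x : ℝ | s * x ∈ Ioi (s * xc)} = Ioi xc := by
        ext x
        simp only [mem_setOf_eq, mem_Ioi]
        exact mul_lt_mul_iff_right₀ hs
      rw [hset1, hset2, μL_toReal measurableSet_Ioi, μL_toReal measurableSet_Ioi,
        integral_f_Ioi0, integral_f_Ioi0] at key
      -- key : (exp (xc - c) + 1)⁻¹ ≤ exp ε * (exp xc + 1)⁻¹ + δ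
      have hne : a - b ≠ 0 := by linarith
      have hane : a ≠ 0 := by linarith
      have hb0 : b ≠ 0 := by linarith
      have h21 : a ^ 2 - 1 ≠ 0 := by nlinarith
      have s1 : Real.exp (xc - c) + 1 = (a^2 - 1)/(a*(a - b)) := by
        rw [Real.exp_sub, hexc, ← ha2, hudef]
        have hh1 : a - b ≠ 0 := by linarith
        have hh2 : a ≠ 0 := by linarith
        field_simp
        ring
      have s2 : Real.exp xc + 1 = b*(a^2 - 1)/(a - b) := by
        rw [hexc, hudef]
        have hh1 : a - b ≠ 0 := by linarith
        field_simp
        ring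
      rw [s1, s2, ← hb2, inv_div, inv_div] at key
      have hkey2 : (a - b)^2 ≤ δ * (a^2 - 1) := by
        have hpos : (0:ℝ) < a^2 - 1 := by nlinarith
        have e1 : a*(a-b)/(a^2-1) = a*(a-b)/(a^2-1) := rfl
        have key3 : a*(a-b)/(a^2-1) - b^2 * ((a-b)/(b*(a^2-1))) ≤ δ := by linarith
        have key4 : a*(a-b)/(a^2-1) - b^2 * ((a-b)/(b*(a^2-1))) = (a-b)^2/(a^2-1) := by
          field_simp
        rw [key4, div_le_iff₀ hpos] at key3
        linarith
      -- Q(a) ≤ 0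
      have hQ : (1-δ)*a^2 - 2*a*b + b^2 + δ ≤ 0 := by nlinarith
      have hsqle : ((1-δ)*a - b)^2 ≤ D := by
        rw [hDdef, ← hb2]
        nlinarith [mul_nonneg h1δ.le (neg_nonneg.2 hQ)]
      have haA : a ≤ A := by
        rw [hAdef, le_div_iff₀ h1δ]
        have h5 : (1-δ)*a - b ≤ Real.sqrt D := Real.le_sqrt_of_sq_le hsqle
        linarith
      calc Δ / s = 2 * Real.log a := by rw [hadef, Real.log_exp]; ring
        _ ≤ 2 * Real.log A := by
          have := Real.log_le_log (by positivity : (0:ℝ) < a) haA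
          linarith
  · -- reverse
    intro hB t ht S hS
    have main : ∀ c : ℝ, 0 ≤ c → c ≤ Δ / s → ∀ T : Set ℝ, MeasurableSet T →
        ∫ y in T, f (y - c) ≤ Real.exp ε * (∫ y in T, f y) + δ := by
      intro c hc0 hcle T hT
      rcases le_or_gt c ε with hcε | hcε
      · have h := bound_easy hc0 hcε hT
        linarith
      · refine bound_hard hε hcε hδ0 ?_ hT
        set a : ℝ := Real.exp (c / 2) with hadef
        have hba : b < a := by rw [hbdef, hadef]; exact Real.exp_lt_exp.2 (by linarith)
        have ha1 : (1:ℝ) < a := lt_of_le_of_lt hb1 hba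
        clear_value a
        have haA : a ≤ A := by
          have h1 : c / 2 ≤ Real.log A := by linarith [hB]
          calc a = Real.exp (c/2) := hadef
            _ ≤ Real.exp (Real.log A) := Real.exp_le_exp.2 h1
            _ = A := Real.exp_log hA0
        have hAmul : (1-δ)*A = b + Real.sqrt D := by
          rw [hAdef]
          field_simp
        have hup : (1-δ)*a - b ≤ Real.sqrt D := by
          have h2 : (1-δ)*a ≤ (1-δ)*A := mul_le_mul_of_nonneg_left haA h1δ.le
          linarith
        have hlow : -(Real.sqrt D) ≤ (1-δ)*a - b := by
          have h3 : (1-δ)*b ≤ (1-δ)*a := mul_le_mul_of_nonneg_left hba.le h1δ.le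
          nlinarith [hδb]
        have hsqle : ((1-δ)*a - b)^2 ≤ D := by
          have h4 := sq_le_sq' hlow hup
          rwa [hsq] at h4
        have hsqle' : ((1-δ)*a - b)^2 ≤ δ*(b^2+δ-1) := by
          rw [hDdef, ← hb2] at hsqle
          linarith
        have hQ : (1-δ)*a^2 - 2*a*b + b^2 + δ ≤ 0 := by nlinarith [hsqle', h1δ]
        nlinarith [hQ]
    have main2 : ∀ c : ℝ, |c| ≤ Δ / s → ∀ T : Set ℝ, MeasurableSet T →
        (μL {x | x + c ∈ T}).toReal ≤ Real.exp ε * (μL T).toReal + δ := by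
      intro c hc T hT
      rw [μL_shift hT c, μL_toReal hT]
      rcases le_or_gt 0 c with hc0 | hc0
      · exact main c hc0 (le_trans (le_abs_self c) hc) T hT
      · have hTm' : MeasurableSet (Neg.neg ⁻¹' T) := hT.preimage measurable_neg
        have e1 : ∫ y in T, f (y - c) = ∫ y in Neg.neg ⁻¹' T, f (y - (-c)) := by
          rw [setIntegral_comp_neg T (fun y => f (y - c)) hT]
          refine setIntegral_congr_fun hTm' fun y _ => ?_
          rw [show -y - c = -(y - -c) by ring, f_neg]
        have e2 : ∫ y in T, f y = ∫ y in Neg.neg ⁻¹' T, f y := by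
          rw [setIntegral_comp_neg T f hT]
          refine setIntegral_congr_fun hTm' fun y _ => ?_
          rw [f_neg]
        rw [e1, e2]
        refine main (-c) (by linarith) ?_ _ hTm'
        calc -c = |c| := (abs_of_neg hc0).symm
          _ ≤ Δ / s := hc
    have hTmeas : MeasurableSet ((fun x : ℝ => s * x) ⁻¹' S) :=
      hS.preimage (measurable_const_mul s)
    have hset1 : {x : ℝ | t + s * x ∈ S}
        = {x : ℝ | x + t / s ∈ (fun x : ℝ => s * x) ⁻¹' S} := by
      ext x
      simp only [mem_setOf_eq, mem_preimage]
      have hmul : s * (x + t / s) = t + s * x := by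
        field_simp
        ring
      rw [hmul]
    have hset2 : {x : ℝ | s * x ∈ S} = (fun x : ℝ => s * x) ⁻¹' S := rfl
    rw [hset1, hset2]
    refine main2 (t / s) ?_ _ hTmeas
    rw [abs_div, abs_of_pos hs]
    gcongr
end

section
/- Let X ~ f where f(x) = e^{−ψ(x)}, ψ : ℝ → (−∞, ∞] convex and even, with support of f equal to (−a, a), a ∈ (0, ∞]. For a real-valued query q with global sensitivity Δ ≥ 0 and scale s > 0, the mechanism returning q(d) + sX is (ε, δ)-differentially private if and only if F((Δ − t)/s) − e^ε F(−t/s) ≤ δ, where F is the CDF of f and t = sup{z < a s : ψ(z/s) − ψ((z − Δ)/s) ≤ ε}. -/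
open MeasureTheory

open Set


/-- The set where the density-ratio condition holds (unscaled coordinates). -/
def cset (f : ℝ → ℝ) (a : EReal) (E c : ℝ) : Set ℝ :=
  {z : ℝ | (z : EReal) < a ∧ f (z - c) ≤ E * f z}

/-- Monotone likelihood ratio property of log-concave functions. -/
lemma nsc_mlr (f : ℝ → ℝ) (hnonneg : ∀ x, 0 ≤ f x)
    (hlc : ∀ x y t : ℝ, t ∈ Set.Icc (0:ℝ) 1 →
      f x ^ t * f y ^ (1 - t) ≤ f (t * x + (1 - t) * y))
    {x y d : ℝ} (hxy : x ≤ y) (hd : 0 ≤ d) :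
    f (x - d) * f y ≤ f x * f (y - d) := by
  rcases eq_or_lt_of_le hd with h0 | hd
  · rw [← h0, sub_zero, sub_zero, mul_comm]
  by_cases hz : f (x - d) = 0
  · rw [hz, zero_mul]; exact mul_nonneg (hnonneg _) (hnonneg _)
  by_cases hy0 : f y = 0
  · rw [hy0, mul_zero]; exact mul_nonneg (hnonneg _) (hnonneg _)
  have hfx : 0 < f (x - d) := (hnonneg _).lt_of_ne (Ne.symm hz)
  have hfy : 0 < f y := (hnonneg _).lt_of_ne (Ne.symm hy0)
  have hden : 0 < y - x + d := by linarith
  set β : ℝ := (y - x) / (y - x + d) with hβ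
  have hβ0 : 0 ≤ β := div_nonneg (by linarith) hden.le
  have hβ1 : β ≤ 1 := (div_le_one hden).2 (by linarith)
  have h1 : f (x - d) ^ β * f y ^ (1 - β) ≤ f x := by
    have h := hlc (x - d) y β ⟨hβ0, hβ1⟩
    have harg : β * (x - d) + (1 - β) * y = x := by
      rw [hβ]; field_simp; ring
    rwa [harg] at h
  have h2 : f (x - d) ^ (1 - β) * f y ^ β ≤ f (y - d) := by
    have h := hlc (x - d) y (1 - β) ⟨by linarith, by linarith⟩
    have harg : (1 - β) * (x - d) + (1 - (1 - β)) * y = y - d := by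
      rw [hβ]; field_simp; ring
    rwa [harg, show (1:ℝ) - (1 - β) = β by ring] at h
  calc f (x - d) * f y
      = (f (x - d) ^ β * f y ^ (1 - β)) * (f (x - d) ^ (1 - β) * f y ^ β) := by
        rw [mul_mul_mul_comm, ← Real.rpow_add hfx, ← Real.rpow_add hfy,
          show β + (1 - β) = (1:ℝ) by ring, show (1:ℝ) - β + β = 1 by ring,
          Real.rpow_one, Real.rpow_one]
    _ ≤ f x * f (y - d) :=
        mul_le_mul h1 h2
          (mul_nonneg (Real.rpow_nonneg hfx.le _) (Real.rpow_nonneg hfy.le _)) (hnonneg x)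

/-- f vanishes outside the support interval. -/
lemma nsc_fzero (f : ℝ → ℝ) (hnonneg : ∀ x, 0 ≤ f x) (a : EReal)
    (hsupp : {x : ℝ | 0 < f x} = {x : ℝ | -a < (x : EReal) ∧ (x : EReal) < a})
    {z : ℝ} (hz : ¬(-a < (z : EReal) ∧ (z : EReal) < a)) : f z = 0 := by
  have h : z ∉ {x : ℝ | 0 < f x} := by rw [hsupp]; exact hz
  exact le_antisymm (not_lt.1 h) (hnonneg z)

/-- f is maximized at 0. -/
lemma nsc_le_f_zero (f : ℝ → ℝ) (hnonneg : ∀ x, 0 ≤ f x)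
    (hlc : ∀ x y t : ℝ, t ∈ Set.Icc (0:ℝ) 1 →
      f x ^ t * f y ^ (1 - t) ≤ f (t * x + (1 - t) * y))
    (heven : ∀ x, f (-x) = f x) (c : ℝ) : f c ≤ f 0 := by
  have h := hlc c (-c) (1/2) ⟨by norm_num, by norm_num⟩
  rw [show (1:ℝ)/2 * c + (1 - 1/2) * (-c) = 0 by ring, heven] at h
  by_cases hc : f c = 0
  · rw [hc]; exact hnonneg 0
  · have hpos : 0 < f c := (hnonneg _).lt_of_ne (Ne.symm hc)
    rwa [← Real.rpow_add hpos, show (1:ℝ)/2 + (1 - 1/2) = 1 by norm_num,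
      Real.rpow_one] at h

/-- 0 is in the condition set. -/
lemma nsc_zero_mem (f : ℝ → ℝ) (hnonneg : ∀ x, 0 ≤ f x)
    (hlc : ∀ x y t : ℝ, t ∈ Set.Icc (0:ℝ) 1 →
      f x ^ t * f y ^ (1 - t) ≤ f (t * x + (1 - t) * y))
    (heven : ∀ x, f (-x) = f x) (a : EReal) (ha : 0 < a)
    (E : ℝ) (hE : 1 ≤ E) (c : ℝ) : (0:ℝ) ∈ cset f a E c := by
  refine ⟨by exact_mod_cast ha, ?_⟩
  rw [zero_sub, heven]
  calc f c ≤ f 0 := nsc_le_f_zero f hnonneg hlc heven c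
    _ ≤ E * f 0 := le_mul_of_one_le_left (hnonneg 0) hE

/-- The condition set is downward closed (within `(-∞, a)`). -/
lemma nsc_dc (f : ℝ → ℝ) (hnonneg : ∀ x, 0 ≤ f x)
    (hlc : ∀ x y t : ℝ, t ∈ Set.Icc (0:ℝ) 1 →
      f x ^ t * f y ^ (1 - t) ≤ f (t * x + (1 - t) * y))
    (a : EReal)
    (hsupp : {x : ℝ | 0 < f x} = {x : ℝ | -a < (x : EReal) ∧ (x : EReal) < a})
    (E : ℝ) (hE : 1 ≤ E) (c : ℝ) (hc : 0 ≤ c)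
    {z z' : ℝ} (hzz : z ≤ z') (hz' : z' ∈ cset f a E c) (hza : (z : EReal) < a) :
    z ∈ cset f a E c := by
  refine ⟨hza, ?_⟩
  by_cases h : f z' = 0
  · have hz'le : (z' : EReal) ≤ -a := by
      by_contra hcon
      push_neg at hcon
      have hmem : z' ∈ {x : ℝ | 0 < f x} := by rw [hsupp]; exact ⟨hcon, hz'.1⟩
      exact absurd h (ne_of_gt hmem)
    have hzc : f (z - c) = 0 := by
      refine nsc_fzero f hnonneg a hsupp ?_
      intro hmem
      have h1 : ((z - c : ℝ) : EReal) ≤ (z' : EReal) := by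
        exact_mod_cast (by linarith : z - c ≤ z')
      exact absurd (lt_of_lt_of_le hmem.1 (le_trans h1 hz'le)) (lt_irrefl _)
    rw [hzc]
    exact mul_nonneg (le_trans zero_le_one hE) (hnonneg z)
  · have hz'pos : 0 < f z' := (hnonneg _).lt_of_ne (Ne.symm h)
    have hm := nsc_mlr f hnonneg hlc hzz hc
    have h2 : f (z' - c) ≤ E * f z' := hz'.2
    nlinarith [hnonneg z, mul_le_mul_of_nonneg_left h2 (hnonneg z)]


/-- Key bound: the integral difference over any set is dominated by the tail integral. -/
lemma nsc_key_bound (f : ℝ → ℝ) (hInt : Integrable f) (E : ℝ) (c w : ℝ)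
    (hneg : ∀ z < w, f (z - c) ≤ E * f z)
    (hpos : ∀ z > w, E * f z ≤ f (z - c))
    (A : Set ℝ) (hA : MeasurableSet A) :
    (∫ x in A, f (x - c)) - E * ∫ x in A, f x ≤
      (∫ x in Ioi w, f (x - c)) - E * ∫ x in Ioi w, f x := by
  set g : ℝ → ℝ := fun x => f (x - c) - E * f x with hg
  have hgInt : Integrable g := (hInt.comp_sub_right c).sub (hInt.const_mul E)
  have hrepr : ∀ B : Set ℝ, (∫ x in B, f (x - c)) - E * ∫ x in B, f x = ∫ x in B, g x := by
    intro B
    rw [hg]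
    rw [integral_sub ((hInt.comp_sub_right c).integrableOn) ((hInt.const_mul E).integrableOn),
      integral_const_mul]
  rw [hrepr A, hrepr (Ioi w)]
  have hsplit : ∫ x in A, g x = (∫ x in A ∩ Iio w, g x) + ∫ x in A ∩ Ici w, g x := by
    rw [← setIntegral_union
        (Disjoint.mono inter_subset_right inter_subset_right (Iio_disjoint_Ici le_rfl))
        (hA.inter measurableSet_Ici) hgInt.integrableOn hgInt.integrableOn,
      ← inter_union_distrib_left, Iio_union_Ici, inter_univ]
  have h1 : ∫ x in A ∩ Iio w, g x ≤ 0 :=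
    setIntegral_nonpos (hA.inter measurableSet_Iio)
      (fun x hx => sub_nonpos.2 (hneg x hx.2))
  have h2 : ∫ x in A ∩ Ici w, g x = ∫ x in A ∩ Ioi w, g x :=
    setIntegral_congr_set (ae_eq_set_inter (ae_eq_refl A) Ioi_ae_eq_Ici.symm)
  have h3 : ∫ x in A ∩ Ioi w, g x ≤ ∫ x in Ioi w, g x := by
    refine setIntegral_mono_set hgInt.integrableOn ?_
      (HasSubset.Subset.eventuallyLE inter_subset_right)
    exact (ae_restrict_iff' measurableSet_Ioi).2
      (ae_of_all _ fun x hx => sub_nonneg.2 (hpos x hx))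
  linarith [hsplit, h1, h2 ▸ h3]

/-- Shifting a tail integral. -/
lemma nsc_shift (f : ℝ → ℝ) (c w : ℝ) :
    ∫ x in Ioi w, f (x - c) = ∫ x in Ioi (w - c), f x := by
  have h := (measurePreserving_add_right volume (-c)).setIntegral_preimage_emb
    (measurableEmbedding_addRight (-c)) f (Ioi (w - c))
  have hpre : (fun x : ℝ => x + -c) ⁻¹' Ioi (w - c) = Ioi w := by
    ext x; simp only [mem_preimage, mem_Ioi]; constructor <;> intro <;> linarith
  rw [hpre] at h
  simpa [sub_eq_add_neg] using h

/-- Reflecting a set integral. -/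
lemma nsc_reflect (f : ℝ → ℝ) (A : Set ℝ) :
    ∫ x in A, f x = ∫ x in Neg.neg ⁻¹' A, f (-x) :=
  ((Measure.measurePreserving_neg volume).setIntegral_preimage_emb
    ((Homeomorph.neg ℝ).isClosedEmbedding.measurableEmbedding) f A).symm

/-- Tail integral of an even function equals head integral. -/
lemma nsc_tail (f : ℝ → ℝ) (heven : ∀ x, f (-x) = f x) (u : ℝ) :
    ∫ x in Ioi u, f x = ∫ x in Iic (-u), f x := by
  have h := integral_comp_neg_Ioi u f
  simp_rw [heven] at h
  exact h

/-- Converting withDensity measures to set integrals. -/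
lemma nsc_toReal (f : ℝ → ℝ) (hmeas : Measurable f) (hnonneg : ∀ x, 0 ≤ f x)
    (T : Set ℝ) (hT : MeasurableSet T) :
    ((volume.withDensity fun x => ENNReal.ofReal (f x)) T).toReal = ∫ x in T, f x := by
  rw [withDensity_apply _ hT,
    integral_eq_lintegral_of_nonneg_ae (ae_of_all _ fun x => hnonneg x)
      hmeas.aestronglyMeasurable]

/-- Core privacy bound, unscaled coordinates, nonnegative shift. -/
lemma nsc_core (f : ℝ → ℝ) (hnonneg : ∀ x, 0 ≤ f x) (hInt : Integrable f)
    (hlc : ∀ x y t : ℝ, t ∈ Set.Icc (0:ℝ) 1 →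
      f x ^ t * f y ^ (1 - t) ≤ f (t * x + (1 - t) * y))
    (heven : ∀ x, f (-x) = f x) (a : EReal) (ha : 0 < a)
    (hsupp : {x : ℝ | 0 < f x} = {x : ℝ | -a < (x : EReal) ∧ (x : EReal) < a})
    (E : ℝ) (hE : 1 ≤ E) (δ : ℝ) (hδ : 0 ≤ δ) (Δ' : ℝ)
    (H : ∀ w : ℝ, IsLUB (cset f a E Δ') w →
      (∫ u in Iic (Δ' - w), f u) - E * ∫ u in Iic (-w), f u ≤ δ)
    (c : ℝ) (hc0 : 0 ≤ c) (hc : c ≤ Δ') (A : Set ℝ) (hA : MeasurableSet A) :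
    (∫ y in A, f (y - c)) - E * ∫ y in A, f y ≤ δ := by
  have hub : ∀ c', 0 ≤ c' → ¬ BddAbove (cset f a E c') → ∀ z, f (z - c') ≤ E * f z := by
    intro c' hc' hb z
    obtain ⟨z', hz', hzz'⟩ := not_bddAbove_iff.1 hb z
    exact (nsc_dc f hnonneg hlc a hsupp E hE c' hc' hzz'.le hz'
      (lt_trans (by exact_mod_cast hzz' : (z : EReal) < (z' : EReal)) hz'.1)).2
  have hptle : ∀ (c' : ℝ) (B : Set ℝ), (∀ z, f (z - c') ≤ E * f z) →
      (∫ y in B, f (y - c')) - E * ∫ y in B, f y ≤ 0 := by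
    intro c' B hall
    have h1 : ∫ y in B, f (y - c') ≤ ∫ y in B, E * f y :=
      setIntegral_mono ((hInt.comp_sub_right c').integrableOn)
        ((hInt.const_mul E).integrableOn) (fun y => hall y)
    rw [integral_const_mul] at h1
    linarith
  have hsign : ∀ (c' : ℝ), 0 ≤ c' → ∀ w, IsLUB (cset f a E c') w →
      (∀ z < w, f (z - c') ≤ E * f z) ∧ (∀ z > w, E * f z ≤ f (z - c')) := by
    intro c' hc' w hlub
    constructor
    · intro z hz
      obtain ⟨z', hz', hzz', _⟩ := hlub.exists_between hz
      exact (nsc_dc f hnonneg hlc a hsupp E hE c' hc' hzz'.le hz'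
        (lt_trans (by exact_mod_cast hzz' : (z : EReal) < (z' : EReal)) hz'.1)).2
    · intro z hz
      have hznm : z ∉ cset f a E c' := fun hm => absurd (hlub.1 hm) (not_le.2 hz)
      by_cases hza : (z : EReal) < a
      · by_contra hcon
        push_neg at hcon
        exact hznm ⟨hza, hcon.le⟩
      · rw [nsc_fzero f hnonneg a hsupp (fun hm => hza hm.2), mul_zero]
        exact hnonneg _
  have hne : (cset f a E c).Nonempty := ⟨0, nsc_zero_mem f hnonneg hlc heven a ha E hE c⟩
  by_cases hbdd : BddAbove (cset f a E c)
  · set w := sSup (cset f a E c) with hw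
    have hlubc : IsLUB (cset f a E c) w := isLUB_csSup hne hbdd
    obtain ⟨hnegc, hposc⟩ := hsign c hc0 w hlubc
    have step1 := nsc_key_bound f hInt E c w hnegc hposc A hA
    have step2 : ∫ x in Ioi w, f (x - c) ≤ ∫ x in Ioi w, f (x - Δ') := by
      rw [nsc_shift, nsc_shift]
      exact setIntegral_mono_set hInt.integrableOn
        ((ae_restrict_iff' measurableSet_Ioi).2 (ae_of_all _ fun x _ => hnonneg x))
        (HasSubset.Subset.eventuallyLE (Ioi_subset_Ioi (by linarith)))
    have step3 : (∫ x in Ioi w, f (x - Δ')) - E * ∫ x in Ioi w, f x ≤ δ := by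
      by_cases hbdd2 : BddAbove (cset f a E Δ')
      · have hne2 : (cset f a E Δ').Nonempty :=
          ⟨0, nsc_zero_mem f hnonneg hlc heven a ha E hE Δ'⟩
        set w2 := sSup (cset f a E Δ') with hw2
        have hlub2 : IsLUB (cset f a E Δ') w2 := isLUB_csSup hne2 hbdd2
        obtain ⟨hneg2, hpos2⟩ := hsign Δ' (le_trans hc0 hc) w2 hlub2
        have hk := nsc_key_bound f hInt E Δ' w2 hneg2 hpos2 (Ioi w) measurableSet_Ioi
        have heq : (∫ x in Ioi w2, f (x - Δ')) - E * ∫ x in Ioi w2, f x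
            = (∫ u in Iic (Δ' - w2), f u) - E * ∫ u in Iic (-w2), f u := by
          rw [nsc_shift, nsc_tail f heven, nsc_tail f heven,
            show -(w2 - Δ') = Δ' - w2 by ring]
        linarith [H w2 hlub2, heq ▸ hk]
      · exact (hptle Δ' (Ioi w) (hub Δ' (le_trans hc0 hc) hbdd2)).trans hδ
    linarith
  · exact (hptle c A (hub c hc0 hbdd)).trans hδ

/-- Necessary and sufficient condition for `(ε, δ)`-differential privacy of a
mechanism adding symmetric log-concave noise `sX`, `X ~ f = e^{−ψ}` with
support `(−a, a)`: privacy holds iff `F((Δ−t)/s) − e^ε F(−t/s) ≤ δ` where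
`t = sup{z < as : f((z−Δ)/s) ≤ e^ε f(z/s)}` (the condition
`ψ(z/s) − ψ((z−Δ)/s) ≤ ε` expressed through the density). -/
theorem necc_suff_condition (f : ℝ → ℝ) (hmeas : Measurable f)
    (hnonneg : ∀ x, 0 ≤ f x) (hint : ∫ x, f x = 1)
    (hlc : ∀ x y t : ℝ, t ∈ Set.Icc (0:ℝ) 1 →
      f x ^ t * f y ^ (1 - t) ≤ f (t * x + (1 - t) * y))
    (heven : ∀ x, f (-x) = f x)
    (hlsc : LowerSemicontinuous f)
    (a : EReal) (ha : 0 < a)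
    (hsupp : {x : ℝ | 0 < f x} = {x : ℝ | -a < (x : EReal) ∧ (x : EReal) < a})
    (Δ : ℝ) (hΔ : 0 ≤ Δ) (s : ℝ) (hs : 0 < s) (ε δ : ℝ) (hε : 0 ≤ ε) (hδ : 0 ≤ δ) :
    (∀ t₀ : ℝ, |t₀| ≤ Δ → ∀ S : Set ℝ, MeasurableSet S →
        ((volume.withDensity fun x => ENNReal.ofReal (f x))
            {x | t₀ + s * x ∈ S}).toReal ≤
          Real.exp ε *
            ((volume.withDensity fun x => ENNReal.ofReal (f x))
              {x | s * x ∈ S}).toReal + δ) ↔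
      (∀ t : ℝ,
        IsLUB {z : ℝ | (z : EReal) < a * (s : EReal) ∧
            f ((z - Δ) / s) ≤ Real.exp ε * f (z / s)} t →
        (∫ u in Set.Iic ((Δ - t) / s), f u) -
            Real.exp ε * (∫ u in Set.Iic (-t / s), f u) ≤ δ) := by
  have hE : 1 ≤ Real.exp ε := Real.one_le_exp hε
  have hInt : Integrable f := by
    by_contra h
    rw [integral_undef h] at hint
    norm_num at hint
  have hmulas : ∀ z : ℝ, ((z : EReal) < a * (s : EReal)) ↔ ((z / s : ℝ) : EReal) < a := by
    intro z
    induction a using EReal.rec with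
    | bot => exact absurd ha (not_lt.2 bot_le)
    | coe r =>
      rw [← EReal.coe_mul, EReal.coe_lt_coe_iff, EReal.coe_lt_coe_iff]
      exact (div_lt_iff₀ hs).symm
    | top =>
      rw [EReal.top_mul_of_pos (by exact_mod_cast hs)]
      simp [EReal.coe_lt_top]
  have hbridge : ∀ z : ℝ,
      (z ∈ {z : ℝ | (z : EReal) < a * (s : EReal) ∧
        f ((z - Δ) / s) ≤ Real.exp ε * f (z / s)}) ↔
      z / s ∈ cset f a (Real.exp ε) (Δ / s) := by
    intro z
    simp only [Set.mem_setOf_eq, cset]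
    rw [hmulas z, sub_div]
  have hlubtrans : ∀ w : ℝ, IsLUB (cset f a (Real.exp ε) (Δ / s)) w →
      IsLUB {z : ℝ | (z : EReal) < a * (s : EReal) ∧
        f ((z - Δ) / s) ≤ Real.exp ε * f (z / s)} (s * w) := by
    intro w hw
    constructor
    · intro z hz
      have h1 : z / s ≤ w := hw.1 ((hbridge z).1 hz)
      have h2 : z = s * (z / s) := by field_simp
      rw [h2]
      exact mul_le_mul_of_nonneg_left h1 hs.le
    · intro u hu
      have h1 : w ≤ u / s := by
        refine hw.2 (fun w' hw' => ?_)
        have hm : s * w' ∈ {z : ℝ | (z : EReal) < a * (s : EReal) ∧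
            f ((z - Δ) / s) ≤ Real.exp ε * f (z / s)} := by
          refine (hbridge (s * w')).2 ?_
          rwa [mul_div_cancel_left₀ _ (ne_of_gt hs)]
        have h2 := hu hm
        exact (le_div_iff₀ hs).2 (by linarith [mul_comm s w'])
      have h3 := (le_div_iff₀ hs).1 h1
      linarith [mul_comm s w]
  constructor
  · -- privacy → inequality at the LUB
    intro Hpriv t hlub
    have h1 := Hpriv Δ (by rw [abs_of_nonneg hΔ]) (Ioi t) measurableSet_Ioi
    have hset1 : {x : ℝ | Δ + s * x ∈ Ioi t} = Ioi ((t - Δ) / s) := by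
      ext x
      simp only [mem_setOf_eq, mem_Ioi]
      rw [div_lt_iff₀ hs]
      constructor <;> intro h <;> nlinarith [mul_comm s x]
    have hset2 : {x : ℝ | s * x ∈ Ioi t} = Ioi (t / s) := by
      ext x
      simp only [mem_setOf_eq, mem_Ioi]
      rw [div_lt_iff₀ hs]
      constructor <;> intro h <;> nlinarith [mul_comm s x]
    rw [hset1, hset2, nsc_toReal f hmeas hnonneg _ measurableSet_Ioi,
      nsc_toReal f hmeas hnonneg _ measurableSet_Ioi,
      nsc_tail f heven, nsc_tail f heven,
      show -((t - Δ) / s) = (Δ - t) / s by ring,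
      show -(t / s) = -t / s by ring] at h1
    linarith
  · -- inequality at the LUB → privacy
    intro H t₀ ht₀ S hS
    have hA : MeasurableSet {x : ℝ | s * x ∈ S} := (measurable_id.const_mul s) hS
    have hT : MeasurableSet {x : ℝ | t₀ + s * x ∈ S} :=
      ((measurable_id.const_mul s).const_add t₀) hS
    rw [nsc_toReal f hmeas hnonneg _ hT, nsc_toReal f hmeas hnonneg _ hA]
    have hTA : {x : ℝ | t₀ + s * x ∈ S}
        = (fun x : ℝ => x + t₀ / s) ⁻¹' {x : ℝ | s * x ∈ S} := by
      ext x
      simp only [mem_setOf_eq, mem_preimage]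
      rw [show s * (x + t₀ / s) = t₀ + s * x by field_simp; ring]
    have htrans : ∫ x in {x : ℝ | t₀ + s * x ∈ S}, f x
        = ∫ y in {x : ℝ | s * x ∈ S}, f (y - t₀ / s) := by
      rw [hTA]
      have h := (measurePreserving_add_right volume (t₀ / s)).setIntegral_preimage_emb
        (measurableEmbedding_addRight (t₀ / s)) (fun y => f (y - t₀ / s))
        {x : ℝ | s * x ∈ S}
      simpa using h
    rw [htrans]
    have H' : ∀ w : ℝ, IsLUB (cset f a (Real.exp ε) (Δ / s)) w →
        (∫ u in Iic (Δ / s - w), f u) - Real.exp ε * ∫ u in Iic (-w), f u ≤ δ := by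
      intro w hw
      have h := H (s * w) (hlubtrans w hw)
      rw [show (Δ - s * w) / s = Δ / s - w by field_simp,
        show -(s * w) / s = -w by rw [neg_div, mul_div_cancel_left₀ _ (ne_of_gt hs)]] at h
      linarith
    rcases le_or_gt 0 t₀ with hpos | hneg
    · have hcore := nsc_core f hnonneg hInt hlc heven a ha hsupp (Real.exp ε) hE δ hδ
        (Δ / s) H' (t₀ / s) (div_nonneg hpos hs.le)
        (by gcongr; exact le_trans (le_abs_self t₀) ht₀)
        {x : ℝ | s * x ∈ S} hA
      linarith
    · set B := Neg.neg ⁻¹' {x : ℝ | s * x ∈ S} with hB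
      have hBmeas : MeasurableSet B := hA.preimage measurable_neg
      have r1 : ∫ y in {x : ℝ | s * x ∈ S}, f (y - t₀ / s)
          = ∫ y in B, f (y - -t₀ / s) := by
        rw [nsc_reflect (fun y => f (y - t₀ / s)) {x : ℝ | s * x ∈ S}]
        refine integral_congr_ae (ae_of_all _ fun y => ?_)
        simp only
        rw [show -y - t₀ / s = -(y - -t₀ / s) by ring, heven]
      have r2 : ∫ y in {x : ℝ | s * x ∈ S}, f y = ∫ y in B, f y := by
        rw [nsc_reflect f {x : ℝ | s * x ∈ S}]
        exact integral_congr_ae (ae_of_all _ fun y => heven y)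
      rw [r1, r2]
      have hcore := nsc_core f hnonneg hInt hlc heven a ha hsupp (Real.exp ε) hE δ hδ
        (Δ / s) H' (-t₀ / s) (div_nonneg (by linarith) hs.le)
        (by gcongr; exact le_trans (neg_le_abs t₀) ht₀)
        B hBmeas
      linarith
end

section
/- Under the hypotheses of the necessary-and-sufficient condition for log-concave symmetric mechanisms: if the criterion F((Δ − t)/s) − e^ε F(−t/s) ≤ δ holds at scale s > 0 (with t defined as the appropriate supremum depending on s), then it also holds for every scale s' > s. -/
open MeasureTheory

lemma unimodal_aux (f : ℝ → ℝ) (hnonneg : ∀ x, 0 ≤ f x)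
    (hlc : ∀ x y t : ℝ, t ∈ Set.Icc (0:ℝ) 1 →
      f x ^ t * f y ^ (1 - t) ≤ f (t * x + (1 - t) * y))
    (heven : ∀ x, f (-x) = f x) :
    ∀ x y : ℝ, |x| ≤ |y| → f y ≤ f x := by
  have key : ∀ x y : ℝ, 0 < y → |x| ≤ y → f y ≤ f x := by
    intro x y hy hxy
    rcases (hnonneg y).eq_or_lt with h0 | hfy
    · rw [← h0]; exact hnonneg x
    obtain ⟨hx1, hx2⟩ := abs_le.mp hxy
    set T := (x + y) / (2 * y) with hT
    have hT0 : 0 ≤ T := div_nonneg (by linarith) (by linarith)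
    have hT1 : T ≤ 1 := by rw [div_le_one (by linarith)]; linarith
    have harg : T * y + (1 - T) * (-y) = x := by
      rw [hT]; field_simp; ring
    have h := hlc y (-y) T ⟨hT0, hT1⟩
    rw [harg, heven] at h
    calc f y = f y ^ T * f y ^ (1 - T) := by
          rw [← Real.rpow_add hfy]; norm_num
      _ ≤ f x := h
  intro x y hxy
  rcases lt_trichotomy y 0 with h | h | h
  · rw [← heven y]
    exact key x (-y) (by linarith) (by rwa [abs_of_neg h] at hxy)
  · subst h
    have hx0 : x = 0 := abs_eq_zero.mp (le_antisymm (by simpa using hxy) (abs_nonneg x))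
    exact le_of_eq (by rw [hx0])
  · exact key x y h (by rwa [abs_of_pos h] at hxy)

lemma mlr_aux (f : ℝ → ℝ) (hnonneg : ∀ x, 0 ≤ f x)
    (hlc : ∀ x y t : ℝ, t ∈ Set.Icc (0:ℝ) 1 →
      f x ^ t * f y ^ (1 - t) ≤ f (t * x + (1 - t) * y)) :
    ∀ u v e : ℝ, u ≤ v → 0 ≤ e → f (u - e) * f v ≤ f (v - e) * f u := by
  intro u v e huv he
  rcases (hnonneg (u - e)).eq_or_lt with h1 | h1
  · rw [← h1, zero_mul]; exact mul_nonneg (hnonneg _) (hnonneg _)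
  rcases (hnonneg v).eq_or_lt with h2 | h2
  · rw [← h2, mul_zero]; exact mul_nonneg (hnonneg _) (hnonneg _)
  rcases (add_nonneg (sub_nonneg.mpr huv) he).eq_or_lt with hd | hd
  · have he0 : e = 0 := by
      have := sub_nonneg.mpr huv; linarith
    have huv0 : u = v := by linarith
    subst huv0
    exact le_rfl
  set T := (v - u) / (v - u + e) with hT
  have hT0 : 0 ≤ T := div_nonneg (by linarith) hd.le
  have hT1 : T ≤ 1 := by rw [hT, div_le_one hd]; linarith
  have ha1 : T * (u - e) + (1 - T) * v = u := by
    rw [hT]; field_simp; ring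
  have ha2 : (1 - T) * (u - e) + (1 - (1 - T)) * v = v - e := by
    rw [hT]; field_simp; ring
  have k1 := hlc (u - e) v T ⟨hT0, hT1⟩
  rw [ha1] at k1
  have k2 := hlc (u - e) v (1 - T) ⟨by linarith, by linarith⟩
  rw [ha2] at k2
  have hmul := mul_le_mul k1 k2 (by positivity) (hnonneg u)
  have hre : f (u - e) ^ T * f v ^ (1 - T) * (f (u - e) ^ (1 - T) * f v ^ (1 - (1 - T)))
      = f (u - e) * f v := by
    rw [show (1 - (1 - T)) = T by ring, mul_mul_mul_comm, ← Real.rpow_add h1,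
      ← Real.rpow_add h2]
    norm_num
  rw [hre] at hmul
  calc f (u - e) * f v ≤ f u * f (v - e) := hmul
    _ = f (v - e) * f u := mul_comm _ _

lemma main_aux (f : ℝ → ℝ) (hnonneg : ∀ x, 0 ≤ f x)
    (hInt : Integrable f) (heven : ∀ x, f (-x) = f x)
    (Δ ε δ : ℝ) (hΔ : 0 < Δ)
    (s : ℝ) (hs : 0 < s) (s' : ℝ) (hs' : 0 < s') (hss' : s < s')
    (t t' : ℝ)
    (hsneg : ∀ u : ℝ, u < t / s → f (u - Δ / s) ≤ Real.exp ε * f u)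
    (hspos : ∀ u : ℝ, t / s < u → Real.exp ε * f u ≤ f (u - Δ / s))
    (hD : (∫ u in Set.Iic ((Δ - t) / s), f u) -
        Real.exp ε * (∫ u in Set.Iic (-t / s), f u) ≤ δ) :
    (∫ u in Set.Iic ((Δ - t') / s'), f u) -
        Real.exp ε * (∫ u in Set.Iic (-t' / s'), f u) ≤ δ := by
  have hIntOn : ∀ x : ℝ, IntegrableOn f (Set.Iic x) := fun x => hInt.integrableOn
  have Fmono : ∀ x y : ℝ, x ≤ y →
      (∫ u in Set.Iic x, f u) ≤ ∫ u in Set.Iic y, f u := by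
    intro x y hxy
    exact setIntegral_mono_set (hIntOn y) (Filter.Eventually.of_forall hnonneg)
      ((Set.Iic_subset_Iic.mpr hxy).eventuallyLE)
  set c := Δ / s with hc
  set τ := t / s with hτ
  have key : ∀ w : ℝ,
      (∫ u in Set.Iic (c - w), f u) - Real.exp ε * (∫ u in Set.Iic (-w), f u)
      ≤ (∫ u in Set.Iic (c - τ), f u) - Real.exp ε * (∫ u in Set.Iic (-τ), f u) := by
    intro w
    have e1 : (∫ u in Set.Iic (c - τ), f u) - (∫ u in Set.Iic (c - w), f u)
        = ∫ u in τ..w, f (u - c) := by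
      rw [intervalIntegral.integral_Iic_sub_Iic (hIntOn _) (hIntOn _),
        intervalIntegral.integral_comp_sub_right f c,
        show τ - c = -(c - τ) by ring, show w - c = -(c - w) by ring,
        ← intervalIntegral.integral_comp_neg f]
      simp only [heven]
    have e2 : (∫ u in Set.Iic (-τ), f u) - (∫ u in Set.Iic (-w), f u)
        = ∫ u in τ..w, f u := by
      rw [intervalIntegral.integral_Iic_sub_Iic (hIntOn _) (hIntOn _),
        ← intervalIntegral.integral_comp_neg f]
      simp only [heven]
    have hi1 : IntervalIntegrable (fun u => f (u - c)) volume τ w := by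
      simpa using (hInt.intervalIntegrable (a := τ - c) (b := w - c)).comp_sub_right c
    have hi2 : IntervalIntegrable f volume τ w := hInt.intervalIntegrable
    have ei : ∫ u in τ..w, (f (u - c) - Real.exp ε * f u)
        = (∫ u in τ..w, f (u - c)) - Real.exp ε * ∫ u in τ..w, f u := by
      rw [intervalIntegral.integral_sub hi1 (hi2.const_mul _),
        intervalIntegral.integral_const_mul]
    have sign : 0 ≤ ∫ u in τ..w, (f (u - c) - Real.exp ε * f u) := by
      rcases le_total τ w with h | h
      · rw [intervalIntegral.integral_of_le h]
        apply setIntegral_nonneg measurableSet_Ioc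
        intro u hu
        have := hspos u hu.1
        linarith
      · rw [intervalIntegral.integral_symm w τ, intervalIntegral.integral_of_le h,
          integral_Ioc_eq_integral_Ioo]
        apply neg_nonneg.mpr
        apply setIntegral_nonpos_ae measurableSet_Ioo
        apply Filter.Eventually.of_forall
        intro u hu
        have := hsneg u hu.2
        linarith
    have hcomb : ((∫ u in Set.Iic (c - τ), f u) - Real.exp ε * (∫ u in Set.Iic (-τ), f u))
        - ((∫ u in Set.Iic (c - w), f u) - Real.exp ε * (∫ u in Set.Iic (-w), f u))
        = ∫ u in τ..w, (f (u - c) - Real.exp ε * f u) := by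
      rw [ei, ← e1, ← e2]; ring
    linarith [sign, hcomb]
  set w0 := t' / s' + c - Δ / s' with hw0
  have hΔss : Δ / s' ≤ c := by
    rw [hc]; gcongr
  have ht'w : (Δ - t') / s' = c - w0 := by
    rw [hw0, sub_div]; ring
  have h1 : (∫ u in Set.Iic (-w0), f u) ≤ ∫ u in Set.Iic (-(t' / s')), f u :=
    Fmono _ _ (by rw [hw0]; linarith)
  have hmul := mul_le_mul_of_nonneg_left h1 (Real.exp_nonneg ε)
  have hct : c - τ = (Δ - t) / s := by rw [hc, hτ, div_sub_div_same]
  have hnt : -τ = -t / s := by rw [hτ, neg_div]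
  have hDfix : (∫ u in Set.Iic (c - τ), f u) - Real.exp ε * (∫ u in Set.Iic (-τ), f u) ≤ δ := by
    rw [hct, hnt]; exact hD
  have hgoal2 : -t' / s' = -(t' / s') := by rw [neg_div]
  rw [ht'w, hgoal2]
  calc (∫ u in Set.Iic (c - w0), f u) - Real.exp ε * (∫ u in Set.Iic (-(t' / s')), f u)
      ≤ (∫ u in Set.Iic (c - w0), f u) - Real.exp ε * (∫ u in Set.Iic (-w0), f u) := by
        linarith
    _ ≤ (∫ u in Set.Iic (c - τ), f u) - Real.exp ε * (∫ u in Set.Iic (-τ), f u) := key w0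
    _ ≤ δ := hDfix

/-- The privacy criterion `F((Δ−t)/s) − e^ε F(−t/s) ≤ δ` (with `t` the
appropriate supremum depending on the scale) is monotone in the scale:
if it holds at scale `s > 0` then it holds at every scale `s' > s`. -/
theorem criterion_monotone_in_scale (f : ℝ → ℝ) (hmeas : Measurable f)
    (hnonneg : ∀ x, 0 ≤ f x) (hint : ∫ x, f x = 1)
    (hlc : ∀ x y t : ℝ, t ∈ Set.Icc (0:ℝ) 1 →
      f x ^ t * f y ^ (1 - t) ≤ f (t * x + (1 - t) * y))
    (heven : ∀ x, f (-x) = f x)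
    (hlsc : LowerSemicontinuous f)
    (a : EReal) (ha : 0 < a)
    (hsupp : {x : ℝ | 0 < f x} = {x : ℝ | -a < (x : EReal) ∧ (x : EReal) < a})
    (Δ : ℝ) (hΔ : 0 < Δ) (ε δ : ℝ) (hε : 0 ≤ ε) (hδ : 0 ≤ δ)
    (s : ℝ) (hs : 0 < s)
    (hcrit : ∀ t : ℝ,
      IsLUB {z : ℝ | (z : EReal) < a * (s : EReal) ∧
          f ((z - Δ) / s) ≤ Real.exp ε * f (z / s)} t →
      (∫ u in Set.Iic ((Δ - t) / s), f u) -
          Real.exp ε * (∫ u in Set.Iic (-t / s), f u) ≤ δ) :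
    ∀ s' : ℝ, s < s' →
      ∀ t : ℝ,
        IsLUB {z : ℝ | (z : EReal) < a * (s' : EReal) ∧
            f ((z - Δ) / s') ≤ Real.exp ε * f (z / s')} t →
        (∫ u in Set.Iic ((Δ - t) / s'), f u) -
            Real.exp ε * (∫ u in Set.Iic (-t / s'), f u) ≤ δ := by
  intro s' hss' t' ht'
  have hs' : 0 < s' := hs.trans hss'
  have hmono := unimodal_aux f hnonneg hlc heven
  have hprod := mlr_aux f hnonneg hlc
  have hInt : Integrable f := by
    by_contra h
    rw [integral_undef h] at hint
    exact one_ne_zero hint.symm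
  have hiff : ∀ x : ℝ, 0 < f x ↔ (-a < (x : EReal) ∧ (x : EReal) < a) :=
    fun x => Set.ext_iff.mp hsupp x
  have hexp1 : (1:ℝ) ≤ Real.exp ε := Real.one_le_exp hε
  have hane : a ≠ ⊥ := ne_bot_of_gt ha
  -- descent along monotone likelihood ratio
  have hdesc : ∀ σ : ℝ, 0 < σ → ∀ z v : ℝ, z ≤ v → (v : EReal) < a * (σ : EReal) →
      f ((v - Δ) / σ) ≤ Real.exp ε * f (v / σ) →
      f ((z - Δ) / σ) ≤ Real.exp ε * f (z / σ) := by
    intro σ hσ z v hzv hva hv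
    rcases (hnonneg (v / σ)).eq_or_lt with h0 | h0
    · -- f (v/σ) = 0 : the support is bounded and v/σ is at or below -a
      have hva' : ((v / σ : ℝ) : EReal) < a := by
        rcases eq_or_ne a ⊤ with rfl | hne
        · exact EReal.coe_lt_top _
        · rw [← EReal.coe_toReal hne hane] at hva ⊢
          rw [← EReal.coe_mul, EReal.coe_lt_coe_iff] at hva
          rw [EReal.coe_lt_coe_iff]
          exact (div_lt_iff₀ hσ).mpr hva
      have hnot : ¬((-a : EReal) < ((v / σ : ℝ) : EReal) ∧ ((v / σ : ℝ) : EReal) < a) :=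
        fun hh => absurd ((hiff _).mpr hh) (by rw [← h0]; exact lt_irrefl 0)
      push_neg at hnot
      have hle : ((v / σ : ℝ) : EReal) ≤ -a := by
        by_contra hgt
        push_neg at hgt
        exact absurd hva' (not_lt.mpr (hnot hgt))
      rcases eq_or_ne a ⊤ with rfl | hne
      · simp at hle
      · rw [← EReal.coe_toReal hne hane, ← EReal.coe_neg, EReal.coe_le_coe_iff] at hle
        set A := a.toReal with hA
        have hzΔ : (z - Δ) / σ < -A := by
          have l1 : (z - Δ) / σ ≤ (v - Δ) / σ := by gcongr
          have l2 : (v - Δ) / σ < v / σ := by gcongr; linarith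
          linarith
        have hz0 : f ((z - Δ) / σ) = 0 := by
          by_contra hf
          have h2 := (hiff _).mp (lt_of_le_of_ne (hnonneg _) (Ne.symm hf))
          rw [← EReal.coe_toReal hne hane, ← EReal.coe_neg, EReal.coe_lt_coe_iff] at h2
          linarith [h2.1]
        rw [hz0]
        exact mul_nonneg (Real.exp_nonneg ε) (hnonneg _)
    · -- f (v/σ) > 0 : use the MLR inequality
      have hp := hprod (z / σ) (v / σ) (Δ / σ) (by gcongr) (by positivity)
      rw [div_sub_div_same, div_sub_div_same] at hp
      have h3 : f ((z - Δ) / σ) * f (v / σ) ≤ (Real.exp ε * f (z / σ)) * f (v / σ) := by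
        calc f ((z - Δ) / σ) * f (v / σ) ≤ f ((v - Δ) / σ) * f (z / σ) := hp
          _ ≤ (Real.exp ε * f (v / σ)) * f (z / σ) :=
              mul_le_mul_of_nonneg_right hv (hnonneg _)
          _ = (Real.exp ε * f (z / σ)) * f (v / σ) := by ring
      exact le_of_mul_le_mul_right h3 h0
  have e1 : ∀ u : ℝ, (u * s) / s = u := fun u => mul_div_cancel_right₀ u hs.ne'
  have e2 : ∀ u : ℝ, (u * s - Δ) / s = u - Δ / s := fun u => by
    rw [sub_div, mul_div_cancel_right₀ _ hs.ne']
  set S : Set ℝ := {z : ℝ | (z : EReal) < a * (s : EReal) ∧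
      f ((z - Δ) / s) ≤ Real.exp ε * f (z / s)} with hSdef
  have hS0 : (0:ℝ) ∈ S := by
    constructor
    · exact EReal.mul_pos ha (EReal.coe_pos.mpr hs)
    · calc f ((0 - Δ) / s) = f (-(Δ / s)) := by rw [zero_sub, neg_div]
        _ = f (Δ / s) := heven _
        _ ≤ f 0 := hmono 0 (Δ / s) (by rw [abs_zero]; positivity)
        _ ≤ Real.exp ε * f 0 := le_mul_of_one_le_left (hnonneg 0) hexp1
        _ = Real.exp ε * f (0 / s) := by rw [zero_div]
  by_cases hbdd : BddAbove S
  · -- the sup at scale s exists; use hcrit and the monotone comparison lemma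
    have ht : IsLUB S (sSup S) := Real.isLUB_sSup ⟨0, hS0⟩ hbdd
    set t := sSup S with htdef
    have hDt := hcrit t ht
    have hsneg : ∀ u : ℝ, u < t / s → f (u - Δ / s) ≤ Real.exp ε * f u := by
      intro u hu
      have hz : u * s < t := (lt_div_iff₀ hs).mp hu
      obtain ⟨v, hvS, hzv⟩ : ∃ v ∈ S, u * s < v := by
        by_contra hcon
        push_neg at hcon
        exact absurd (ht.2 hcon) (not_le.mpr hz)
      have hh := hdesc s hs (u * s) v hzv.le hvS.1 hvS.2
      rwa [e1, e2] at hh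
    have hspos : ∀ u : ℝ, t / s < u → Real.exp ε * f u ≤ f (u - Δ / s) := by
      intro u hu
      have hz : t < u * s := (div_lt_iff₀ hs).mp hu
      have hnS : u * s ∉ S := fun hmem => absurd (ht.1 hmem) (not_le.mpr hz)
      rw [hSdef, Set.mem_setOf_eq, not_and, not_le] at hnS
      by_cases hcase : ((u * s : ℝ) : EReal) < a * (s : EReal)
      · have hh := (hnS hcase).le
        rwa [e1, e2] at hh
      · have hne : a ≠ ⊤ := by
          rintro rfl
          exact hcase (by
            rw [EReal.top_mul_of_pos (EReal.coe_pos.mpr hs)]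
            exact EReal.coe_lt_top _)
        rw [← EReal.coe_toReal hne hane, ← EReal.coe_mul] at hcase
        have hAs : a.toReal * s ≤ u * s := by exact_mod_cast not_lt.mp hcase
        have hAu : a.toReal ≤ u := le_of_mul_le_mul_right hAs hs
        have hfu : f u = 0 := by
          by_contra h
          have h2 := (hiff u).mp (lt_of_le_of_ne (hnonneg u) (Ne.symm h))
          rw [← EReal.coe_toReal hne hane, EReal.coe_lt_coe_iff] at h2
          linarith [h2.2]
        rw [hfu, mul_zero]
        exact hnonneg _
    exact main_aux f hnonneg hInt heven Δ ε δ hΔ s hs s' hs' hss' t t' hsneg hspos hDt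
  · -- if the set at scale s is unbounded, the set at scale s' is all of ℝ: contradiction
    exfalso
    have hatop : a = ⊤ := by
      by_contra hne
      apply hbdd
      refine ⟨a.toReal * s, ?_⟩
      rintro z ⟨hz1, -⟩
      rw [← EReal.coe_toReal hne hane, ← EReal.coe_mul, EReal.coe_lt_coe_iff] at hz1
      exact hz1.le
    have hfpos : ∀ x : ℝ, 0 < f x := by
      intro x
      refine (hiff x).mpr ⟨?_, ?_⟩ <;> simp [hatop]
    have hΔss : Δ / s' < Δ / s := by gcongr
    have hall : ∀ u : ℝ, f (u - Δ / s) ≤ Real.exp ε * f u := by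
      intro u
      obtain ⟨v, hvS, huv⟩ := not_bddAbove_iff.mp hbdd (u * s)
      have hh := hdesc s hs (u * s) v huv.le hvS.1 hvS.2
      rwa [e1, e2] at hh
    have hall' : ∀ u : ℝ, f (u - Δ / s') ≤ Real.exp ε * f u := by
      intro u
      by_contra hcon
      push_neg at hcon
      set v := max u (Δ / s) with hv
      have huv : u ≤ v := le_max_left _ _
      have hΔv : Δ / s ≤ v := le_max_right _ _
      have hp := hprod u v (Δ / s') huv (by positivity)
      have hstep : (Real.exp ε * f u) * f v < f (v - Δ / s') * f u := by
        calc (Real.exp ε * f u) * f v < f (u - Δ / s') * f v :=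
              mul_lt_mul_of_pos_right hcon (hfpos v)
          _ ≤ f (v - Δ / s') * f u := hp
      have h1 : Real.exp ε * f v < f (v - Δ / s') := by
        have hml : (Real.exp ε * f v) * f u < f (v - Δ / s') * f u := by
          calc (Real.exp ε * f v) * f u = (Real.exp ε * f u) * f v := by ring
            _ < f (v - Δ / s') * f u := hstep
        exact lt_of_mul_lt_mul_right hml (hnonneg u)
      have h2 : f (v - Δ / s) ≤ Real.exp ε * f v := hall v
      have h4 : f (v - Δ / s') ≤ f (v - Δ / s) := by
        apply hmono
        rw [abs_of_nonneg (by linarith), abs_of_nonneg (by linarith)]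
        linarith
      linarith
    have hmem : (t' + 1) ∈ {z : ℝ | (z : EReal) < a * (s' : EReal) ∧
        f ((z - Δ) / s') ≤ Real.exp ε * f (z / s')} := by
      constructor
      · rw [hatop, EReal.top_mul_of_pos (EReal.coe_pos.mpr hs')]
        exact EReal.coe_lt_top _
      · have hh := hall' ((t' + 1) / s')
        rwa [div_sub_div_same] at hh
    have := ht'.1 hmem
    linarith
end

section
/- Let ψ : ℝ → ℝ be convex, even, and MLR-unbounded, i.e., for all Δ > 0 and s > 0, ψ(z/s) − ψ((z − Δ)/s) → ∞ as z → ∞. Let f = e^{−ψ} be a density. Then for fixed ε ≥ 0 and Δ > 0, the minimal scale s for which the mechanism q(d) + sX (X ~ f) is (ε, δ)-differentially private tends to infinity as δ → 0. -/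
open MeasureTheory Filter Topology

lemma psi_cont {ψ : ℝ → ℝ} (hconv : ConvexOn ℝ Set.univ ψ) : Continuous ψ := by
  rw [← continuousOn_univ]
  exact hconv.continuousOn isOpen_univ

lemma f_integrable {ψ : ℝ → ℝ} (hdens : ∫ x, Real.exp (-ψ x) = 1) :
    Integrable (fun x => Real.exp (-ψ x)) := by
  by_contra h
  rw [integral_undef h] at hdens
  norm_num at hdens

-- increasing differences
lemma incr_diff {ψ : ℝ → ℝ} (hconv : ConvexOn ℝ Set.univ ψ) {p q h : ℝ}
    (hpq : p ≤ q) (hh : 0 < h) : ψ (p + h) - ψ p ≤ ψ (q + h) - ψ q := by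
  rcases eq_or_lt_of_le hpq with rfl | hpq
  · exact le_rfl
  have h1 : (ψ (p + h) - ψ p) / (p + h - p) ≤ (ψ (q + h) - ψ p) / (q + h - p) :=
    hconv.secant_mono (Set.mem_univ p) (Set.mem_univ _) (Set.mem_univ _)
      (by linarith) (by linarith) (by linarith)
  have h2 : (ψ p - ψ (q + h)) / (p - (q + h)) ≤ (ψ q - ψ (q + h)) / (q - (q + h)) :=
    hconv.secant_mono (Set.mem_univ (q + h)) (Set.mem_univ _) (Set.mem_univ _)
      (by linarith) (by linarith) (by linarith)
  have h2' : (ψ (q + h) - ψ p) / (q + h - p) ≤ (ψ (q + h) - ψ q) / h := by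
    have e1 : (ψ p - ψ (q + h)) / (p - (q + h)) = (ψ (q + h) - ψ p) / (q + h - p) := by
      rw [← neg_div_neg_eq]; ring_nf
    have e2 : (ψ q - ψ (q + h)) / (q - (q + h)) = (ψ (q + h) - ψ q) / h := by
      rw [← neg_div_neg_eq]; ring_nf
    rw [e1, e2] at h2; exact h2
  have h3 : (ψ (p + h) - ψ p) / h ≤ (ψ (q + h) - ψ q) / h := by
    have : p + h - p = h := by ring
    rw [this] at h1
    exact h1.trans h2'
  exact (div_le_div_iff_of_pos_right hh).mp h3

-- even convex: monotone in |x|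
lemma abs_mono {ψ : ℝ → ℝ} (hconv : ConvexOn ℝ Set.univ ψ) (heven : ∀ x, ψ (-x) = ψ x)
    {a b : ℝ} (hab : |a| ≤ |b|) : ψ a ≤ ψ b := by
  have key : ∀ x y : ℝ, 0 ≤ x → x ≤ y → ψ x ≤ ψ y := by
    intro x y hx hxy
    rcases eq_or_lt_of_le (hx.trans hxy) with rfl | hy
    · have : x = 0 := le_antisymm hxy hx
      simp [this]
    have hl : x = ((y + x) / (2 * y)) * y + ((y - x) / (2 * y)) * (-y) := by
      field_simp; ring
    have h1 : 0 ≤ (y + x) / (2 * y) := by positivity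
    have h2 : 0 ≤ (y - x) / (2 * y) := by
      apply div_nonneg (by linarith) (by linarith)
    have h3 : (y + x) / (2 * y) + (y - x) / (2 * y) = 1 := by
      field_simp; ring
    calc ψ x = ψ (((y + x) / (2 * y)) • y + ((y - x) / (2 * y)) • (-y)) := by
          rw [smul_eq_mul, smul_eq_mul, ← hl]
      _ ≤ ((y + x) / (2 * y)) • ψ y + ((y - x) / (2 * y)) • ψ (-y) :=
          hconv.2 (Set.mem_univ y) (Set.mem_univ (-y)) h1 h2 h3
      _ = ψ y := by rw [heven, smul_eq_mul, smul_eq_mul, ← add_mul, h3, one_mul]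
  have ha : ψ a = ψ |a| := by
    rcases abs_choice a with h | h
    · rw [h]
    · rw [h, heven]
  have hb : ψ b = ψ |b| := by
    rcases abs_choice b with h | h
    · rw [h]
    · rw [h, heven]
  rw [ha, hb]
  exact key _ _ (abs_nonneg a) hab

section main
variable {ψ : ℝ → ℝ} {ε Δ s : ℝ}

-- monotonicity of the log-likelihood-ratio
lemma phi_mono (hconv : ConvexOn ℝ Set.univ ψ) (hΔ : 0 < Δ) (hs : 0 < s)
    {z w : ℝ} (hzw : z ≤ w) :
    ψ (z / s) - ψ ((z - Δ) / s) ≤ ψ (w / s) - ψ ((w - Δ) / s) := by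
  have h1 : (z - Δ) / s + Δ / s = z / s := by field_simp; ring
  have h2 : (w - Δ) / s + Δ / s = w / s := by field_simp; ring
  have := incr_diff hconv (p := (z - Δ) / s) (q := (w - Δ) / s) (h := Δ / s)
    (by gcongr) (by positivity)
  rw [h1, h2] at this
  linarith

lemma lub_facts (hconv : ConvexOn ℝ Set.univ ψ) (hΔ : 0 < Δ) (hs : 0 < s) {t : ℝ}
    (ht : IsLUB {z : ℝ | ψ (z / s) - ψ ((z - Δ) / s) ≤ ε} t) :
    (∀ z < t, ψ (z / s) - ψ ((z - Δ) / s) ≤ ε) ∧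
    (∀ z, t < z → ε < ψ (z / s) - ψ ((z - Δ) / s)) := by
  constructor
  · intro z hz
    by_contra hc
    push_neg at hc
    -- z is an upper bound, contradicting t least
    have hub : z ∈ upperBounds {z : ℝ | ψ (z / s) - ψ ((z - Δ) / s) ≤ ε} := by
      intro a ha
      by_contra hza
      push_neg at hza
      have hm := phi_mono hconv hΔ hs hza.le
      have hε' : ψ (z / s) - ψ ((z - Δ) / s) ≤ ε := hm.trans ha
      linarith
    exact absurd (ht.2 hub) (not_le.mpr hz)
  · intro z hz
    by_contra hc
    push_neg at hc
    exact absurd (ht.1 hc) (not_le.mpr hz)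

end main

lemma key_identity {ψ : ℝ → ℝ} {ε Δ s : ℝ}
    (hconv : ConvexOn ℝ Set.univ ψ) (heven : ∀ x, ψ (-x) = ψ x)
    (hdens : ∫ x, Real.exp (-ψ x) = 1)
    (hΔ : 0 < Δ) (hs : 0 < s) {t : ℝ}
    (ht : IsLUB {z : ℝ | ψ (z / s) - ψ ((z - Δ) / s) ≤ ε} t) :
    (∫ u in Set.Iic ((Δ - t) / s), Real.exp (-ψ u)) -
        Real.exp ε * (∫ u in Set.Iic (-t / s), Real.exp (-ψ u))
      = ∫ v, max (Real.exp (-ψ (v + Δ / s)) - Real.exp ε * Real.exp (-ψ v)) 0 := by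
  have hsne : s ≠ 0 := ne_of_gt hs
  set f : ℝ → ℝ := fun x => Real.exp (-ψ x) with hf_def
  set a : ℝ := Δ / s with ha_def
  set B : ℝ := -t / s with hB_def
  set g : ℝ → ℝ := fun v => f (v + a) - Real.exp ε * f v with hg_def
  obtain ⟨fact1, fact2⟩ := lub_facts hconv hΔ hs ht
  have hf : Integrable f := f_integrable hdens
  have hfa : Integrable (fun v => f (v + a)) := hf.comp_add_right a
  have hg : Integrable g := hfa.sub (hf.const_mul (Real.exp ε))
  have hmax : Integrable (fun v => max (g v) 0) := hg.pos_part
  have e1 : ∀ v : ℝ, -(s * v) / s = -v := by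
    intro v; rw [neg_div, mul_div_cancel_left₀ _ hsne]
  have hcancel : s * Δ * s⁻¹ = Δ := by
    rw [mul_comm s Δ, mul_assoc, mul_inv_cancel₀ hsne, mul_one]
  have e2 : ∀ v : ℝ, (-(s * v) - Δ) / s = -(v + a) := by
    intro v; rw [ha_def, div_eq_iff hsne]; ring_nf; rw [hcancel]
  have hg_pos : ∀ v < B, 0 ≤ g v := by
    intro v hv
    have hz : t < -(s * v) := by
      rw [hB_def, lt_div_iff₀ hs] at hv
      nlinarith
    have h2 := fact2 _ hz
    rw [e1 v, e2 v, heven, heven] at h2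
    have hle : Real.exp (ε + -ψ v) ≤ Real.exp (-ψ (v + a)) :=
      Real.exp_le_exp.mpr (by linarith)
    rw [Real.exp_add] at hle
    simp only [hg_def, hf_def]
    linarith
  have hg_neg : ∀ v, B < v → g v ≤ 0 := by
    intro v hv
    have hz : -(s * v) < t := by
      rw [hB_def, div_lt_iff₀ hs] at hv
      nlinarith
    have h1 := fact1 _ hz
    rw [e1 v, e2 v, heven, heven] at h1
    have hle : Real.exp (-ψ (v + a)) ≤ Real.exp (ε + -ψ v) :=
      Real.exp_le_exp.mpr (by linarith)
    rw [Real.exp_add] at hle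
    simp only [hg_def, hf_def]
    linarith
  have hBa : (Δ - t) / s = B + a := by rw [hB_def, ha_def]; ring
  have hind : ∀ v : ℝ, (Set.Iic B).indicator (fun w => f (w + a)) v
      = (Set.Iic (B + a)).indicator f (v + a) := by
    intro v
    by_cases h : v ≤ B
    · rw [Set.indicator_of_mem (Set.mem_Iic.mpr h),
        Set.indicator_of_mem (Set.mem_Iic.mpr (by linarith))]
    · rw [Set.indicator_of_notMem (by simpa using h),
        Set.indicator_of_notMem (by simp; linarith [not_le.mp h])]
  have step1 : (∫ u in Set.Iic ((Δ - t) / s), f u) = ∫ v in Set.Iic B, f (v + a) := by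
    rw [hBa, ← integral_indicator measurableSet_Iic, ← integral_indicator measurableSet_Iic]
    calc ∫ v, (Set.Iic (B + a)).indicator f v
        = ∫ v, (Set.Iic (B + a)).indicator f (v + a) :=
          (integral_add_right_eq_self ((Set.Iic (B + a)).indicator f) a).symm
      _ = ∫ v, (Set.Iic B).indicator (fun w => f (w + a)) v := by
          congr 1; ext v; rw [hind v]
  have step2 : (∫ v in Set.Iic B, f (v + a)) - Real.exp ε * (∫ u in Set.Iic B, f u)
      = ∫ v in Set.Iic B, g v := by
    rw [integral_sub hfa.integrableOn ((hf.const_mul (Real.exp ε)).integrableOn),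
      integral_const_mul]
  have step3 : (∫ v in Set.Iic B, g v) = ∫ v in Set.Iio B, g v :=
    (setIntegral_congr_set Iio_ae_eq_Iic).symm
  have step4 : (∫ v in Set.Iio B, g v) = ∫ v in Set.Iio B, max (g v) 0 := by
    refine setIntegral_congr_fun measurableSet_Iio fun v hv => ?_
    exact (max_eq_left (hg_pos v hv)).symm
  have step5 : (∫ v in Set.Iio B, max (g v) 0) = ∫ v in Set.Iic B, max (g v) 0 :=
    setIntegral_congr_set Iio_ae_eq_Iic
  have step6 : (∫ v in Set.Ioi B, max (g v) 0) = 0 :=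
    setIntegral_eq_zero_of_forall_eq_zero fun v hv => max_eq_right (hg_neg v hv)
  have step7 := intervalIntegral.integral_Iic_add_Ioi (b := B)
    hmax.integrableOn hmax.integrableOn
  show (∫ u in Set.Iic ((Δ - t) / s), f u) - Real.exp ε * (∫ u in Set.Iic B, f u)
      = ∫ v, max (g v) 0
  calc (∫ u in Set.Iic ((Δ - t) / s), f u) - Real.exp ε * (∫ u in Set.Iic B, f u)
      = ∫ v in Set.Iic B, g v := by rw [step1, step2]
    _ = ∫ v in Set.Iic B, max (g v) 0 := by rw [step3, step4, step5]
    _ = ∫ v, max (g v) 0 := by rw [← step7, step6, add_zero]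

noncomputable def Hc (ψ : ℝ → ℝ) (ε c : ℝ) : ℝ :=
  ∫ v, max (Real.exp (-ψ (v + c)) - Real.exp ε * Real.exp (-ψ v)) 0

lemma g_max_int {ψ : ℝ → ℝ} (hdens : ∫ x, Real.exp (-ψ x) = 1) (ε c : ℝ) :
    Integrable (fun v => max (Real.exp (-ψ (v + c)) - Real.exp ε * Real.exp (-ψ v)) 0) :=
  (((f_integrable hdens).comp_add_right c).sub ((f_integrable hdens).const_mul _)).pos_part

lemma f_cont {ψ : ℝ → ℝ} (hconv : ConvexOn ℝ Set.univ ψ) :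
    Continuous (fun x => Real.exp (-ψ x)) :=
  Real.continuous_exp.comp (psi_cont hconv).neg

lemma Hc_pos {ψ : ℝ → ℝ} {ε c : ℝ} (hconv : ConvexOn ℝ Set.univ ψ)
    (heven : ∀ x, ψ (-x) = ψ x)
    (hmlr : ∀ Δ s : ℝ, 0 < Δ → 0 < s →
      Tendsto (fun z => ψ (z / s) - ψ ((z - Δ) / s)) atTop atTop)
    (hdens : ∫ x, Real.exp (-ψ x) = 1) (hc : 0 < c) : 0 < Hc ψ ε c := by
  set g : ℝ → ℝ := fun v => Real.exp (-ψ (v + c)) - Real.exp ε * Real.exp (-ψ v) with hg_def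
  obtain ⟨z₀, hz₀⟩ := (Filter.eventually_atTop.mp
    (Filter.Tendsto.eventually_ge_atTop (hmlr c 1 hc one_pos) (ε + 1)))
  have hgpos : ∀ v ≤ -z₀, 0 < g v := by
    intro v hv
    have h := hz₀ (-v) (by linarith)
    simp only [div_one] at h
    have e : -v - c = -(v + c) := by ring
    rw [e, heven, heven] at h
    have : Real.exp (ε + -ψ v) < Real.exp (-ψ (v + c)) :=
      Real.exp_lt_exp.mpr (by linarith)
    rw [Real.exp_add] at this
    simp only [hg_def]
    linarith
  have hmax : Integrable (fun v => max (g v) 0) := g_max_int hdens ε c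
  have step1 : (∫ v in Set.Ioc (-z₀ - 1) (-z₀), max (g v) 0) ≤ Hc ψ ε c :=
    setIntegral_le_integral hmax (Filter.Eventually.of_forall fun v => le_max_right _ _)
  have step2 : 0 < ∫ v in Set.Ioc (-z₀ - 1) (-z₀), max (g v) 0 := by
    rw [← intervalIntegral.integral_of_le (by linarith : -z₀ - 1 ≤ -z₀)]
    apply intervalIntegral.intervalIntegral_pos_of_pos_on
    · exact hmax.intervalIntegrable
    · intro x hx
      have : 0 < g x := hgpos x (le_of_lt hx.2)
      exact lt_max_iff.mpr (Or.inl this)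
    · linarith
  linarith

lemma psi_zero_min {ψ : ℝ → ℝ} (hconv : ConvexOn ℝ Set.univ ψ)
    (heven : ∀ x, ψ (-x) = ψ x) (x : ℝ) : ψ 0 ≤ ψ x :=
  abs_mono hconv heven (by simp)

lemma f_shift_bound {ψ : ℝ → ℝ} (hconv : ConvexOn ℝ Set.univ ψ)
    (heven : ∀ x, ψ (-x) = ψ x) {c₁ c₂ c v : ℝ} (h1 : c₁ ≤ c) (h2 : c ≤ c₂) :
    Real.exp (-ψ (v + c)) ≤ Real.exp (-ψ (v + c₁)) + Real.exp (-ψ (v + c₂)) +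
      (Set.Icc (-c₂) (-c₁)).indicator (fun _ => Real.exp (-ψ 0)) v := by
  have hind : 0 ≤ (Set.Icc (-c₂) (-c₁)).indicator (fun _ => Real.exp (-ψ 0)) v :=
    Set.indicator_nonneg (fun _ _ => (Real.exp_pos _).le) v
  rcases le_or_gt 0 (v + c₁) with h | h
  · have : ψ (v + c₁) ≤ ψ (v + c) := by
      apply abs_mono hconv heven
      rw [abs_of_nonneg h, abs_of_nonneg (by linarith)]
      linarith
    have := Real.exp_le_exp.mpr (neg_le_neg this)
    have e2 : (0:ℝ) < Real.exp (-ψ (v + c₂)) := Real.exp_pos _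
    linarith
  rcases le_or_gt (v + c₂) 0 with h' | h'
  · have : ψ (v + c₂) ≤ ψ (v + c) := by
      apply abs_mono hconv heven
      rw [abs_of_nonpos h', abs_of_nonpos (by linarith)]
      linarith
    have := Real.exp_le_exp.mpr (neg_le_neg this)
    have e2 : (0:ℝ) < Real.exp (-ψ (v + c₁)) := Real.exp_pos _
    linarith
  · have hmem : v ∈ Set.Icc (-c₂) (-c₁) := ⟨by linarith, by linarith⟩
    rw [Set.indicator_of_mem hmem]
    have : ψ 0 ≤ ψ (v + c) := psi_zero_min hconv heven _
    have := Real.exp_le_exp.mpr (neg_le_neg this)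
    have e1 : (0:ℝ) < Real.exp (-ψ (v + c₁)) := Real.exp_pos _
    have e2 : (0:ℝ) < Real.exp (-ψ (v + c₂)) := Real.exp_pos _
    linarith

lemma bound_integrable {ψ : ℝ → ℝ} (hdens : ∫ x, Real.exp (-ψ x) = 1) (c₁ c₂ : ℝ) :
    Integrable (fun v => Real.exp (-ψ (v + c₁)) + Real.exp (-ψ (v + c₂)) +
      (Set.Icc (-c₂) (-c₁)).indicator (fun _ => Real.exp (-ψ 0)) v) := by
  have hf := f_integrable hdens
  refine ((hf.comp_add_right c₁).add (hf.comp_add_right c₂)).add ?_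
  rw [integrable_indicator_iff measurableSet_Icc]
  exact integrableOn_const measure_Icc_lt_top.ne

lemma Hc_contAt {ψ : ℝ → ℝ} {ε c₀ : ℝ} (hconv : ConvexOn ℝ Set.univ ψ)
    (heven : ∀ x, ψ (-x) = ψ x)
    (hdens : ∫ x, Real.exp (-ψ x) = 1) (hc₀ : 0 < c₀) :
    ContinuousAt (Hc ψ ε) c₀ := by
  have hfc := f_cont hconv
  apply continuousAt_of_dominated (bound := fun v =>
    Real.exp (-ψ (v + c₀ / 2)) + Real.exp (-ψ (v + (c₀ + 1))) +
      (Set.Icc (-(c₀ + 1)) (-(c₀ / 2))).indicator (fun _ => Real.exp (-ψ 0)) v)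
  · apply Filter.Eventually.of_forall
    intro c
    apply Continuous.aestronglyMeasurable
    exact ((hfc.comp (continuous_id.add continuous_const)).sub
      (continuous_const.mul hfc)).max continuous_const
  · have hmem : Set.Ioo (c₀ / 2) (c₀ + 1) ∈ nhds c₀ :=
      Ioo_mem_nhds (by linarith) (by linarith)
    filter_upwards [hmem] with c hc
    apply Filter.Eventually.of_forall
    intro v
    have hb := f_shift_bound hconv heven (c := c) (v := v) hc.1.le hc.2.le
    rw [Real.norm_eq_abs, abs_of_nonneg (le_max_right _ _)]
    rcases max_cases (Real.exp (-ψ (v + c)) - Real.exp ε * Real.exp (-ψ v)) 0 with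
      ⟨heq, _⟩ | ⟨heq, _⟩
    · rw [heq]
      have : 0 ≤ Real.exp ε * Real.exp (-ψ v) :=
        mul_nonneg (Real.exp_pos _).le (Real.exp_pos _).le
      linarith
    · rw [heq]
      have hind : 0 ≤ (Set.Icc (-(c₀ + 1)) (-(c₀ / 2))).indicator
          (fun _ => Real.exp (-ψ 0)) v :=
        Set.indicator_nonneg (fun _ _ => (Real.exp_pos _).le) v
      have e1 : (0:ℝ) < Real.exp (-ψ (v + c₀ / 2)) := Real.exp_pos _
      have e2 : (0:ℝ) < Real.exp (-ψ (v + (c₀ + 1))) := Real.exp_pos _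
      linarith
  · exact bound_integrable hdens _ _
  · apply Filter.Eventually.of_forall
    intro v
    apply Continuous.continuousAt
    exact ((hfc.comp (continuous_const.add continuous_id)).sub
      continuous_const).max continuous_const

lemma Hc_small {ψ : ℝ → ℝ} {ε : ℝ} (hconv : ConvexOn ℝ Set.univ ψ)
    (heven : ∀ x, ψ (-x) = ψ x)
    (hdens : ∫ x, Real.exp (-ψ x) = 1) (hε : 0 ≤ ε) {δ : ℝ} (hδ : 0 < δ) :
    ∃ c : ℝ, 0 < c ∧ Hc ψ ε c ≤ δ := by
  have hfc := f_cont hconv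
  have key : Tendsto (fun n : ℕ => Hc ψ ε (1 / (n + 1))) atTop (𝓝 0) := by
    have h0 : (0:ℝ) = ∫ v : ℝ, (0:ℝ) := by rw [integral_zero]
    rw [h0]
    apply tendsto_integral_of_dominated_convergence
      (bound := fun v => Real.exp (-ψ v) + Real.exp (-ψ (v + 1)) +
        (Set.Icc (-(1:ℝ)) 0).indicator (fun _ => Real.exp (-ψ 0)) v)
    · intro n
      apply Continuous.aestronglyMeasurable
      exact ((hfc.comp (continuous_id.add continuous_const)).sub
        (continuous_const.mul hfc)).max continuous_const
    · have hb := bound_integrable hdens 0 1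
      simp only [add_zero, neg_zero] at hb
      convert hb using 2
    · intro n
      apply Filter.Eventually.of_forall
      intro v
      have hn1 : (0:ℝ) < 1 / ((n:ℝ) + 1) := by positivity
      have hn2 : 1 / ((n:ℝ) + 1) ≤ 1 := by
        rw [div_le_one (by positivity)]
        simp
      have hb := f_shift_bound hconv heven (c₁ := 0) (c₂ := 1) (c := 1 / ((n:ℝ) + 1))
        (v := v) hn1.le hn2
      rw [add_zero, neg_zero] at hb
      rw [Real.norm_eq_abs, abs_of_nonneg (le_max_right _ _)]
      rcases max_cases (Real.exp (-ψ (v + 1 / ((n:ℝ) + 1))) -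
          Real.exp ε * Real.exp (-ψ v)) 0 with ⟨heq, _⟩ | ⟨heq, _⟩
      · rw [heq]
        have : 0 ≤ Real.exp ε * Real.exp (-ψ v) :=
          mul_nonneg (Real.exp_pos _).le (Real.exp_pos _).le
        have hind : 0 ≤ (Set.Icc (-(1:ℝ)) 0).indicator (fun _ => Real.exp (-ψ 0)) v :=
          Set.indicator_nonneg (fun _ _ => (Real.exp_pos _).le) v
        linarith
      · rw [heq]
        have hind : 0 ≤ (Set.Icc (-(1:ℝ)) 0).indicator (fun _ => Real.exp (-ψ 0)) v :=
          Set.indicator_nonneg (fun _ _ => (Real.exp_pos _).le) v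
        have e1 : (0:ℝ) < Real.exp (-ψ v) := Real.exp_pos _
        have e2 : (0:ℝ) < Real.exp (-ψ (v + 1)) := Real.exp_pos _
        linarith
    · apply Filter.Eventually.of_forall
      intro v
      have hlim : Tendsto (fun n : ℕ => v + 1 / ((n:ℝ) + 1)) atTop (𝓝 v) := by
        have : Tendsto (fun n : ℕ => 1 / ((n:ℝ) + 1)) atTop (𝓝 0) :=
          tendsto_one_div_add_atTop_nhds_zero_nat
        simpa using (tendsto_const_nhds.add this)
      have hcont : Tendsto (fun n : ℕ => max (Real.exp (-ψ (v + 1 / ((n:ℝ) + 1))) -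
          Real.exp ε * Real.exp (-ψ v)) 0) atTop
          (𝓝 (max (Real.exp (-ψ v) - Real.exp ε * Real.exp (-ψ v)) 0)) := by
        have := ((hfc.tendsto v).comp hlim).sub (tendsto_const_nhds
          (x := Real.exp ε * Real.exp (-ψ v)))
        exact this.max tendsto_const_nhds
      have hzero : max (Real.exp (-ψ v) - Real.exp ε * Real.exp (-ψ v)) 0 = 0 := by
        apply max_eq_right
        have h1 : (1:ℝ) ≤ Real.exp ε := Real.one_le_exp hε
        nlinarith [Real.exp_pos (-ψ v)]
      rwa [hzero] at hcont
  obtain ⟨n, hn⟩ := (key.eventually_lt_const hδ).exists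
  exact ⟨1 / ((n:ℝ) + 1), by positivity, hn.le⟩

lemma Iic_small {ψ : ℝ → ℝ} (hconv : ConvexOn ℝ Set.univ ψ)
    (hdens : ∫ x, Real.exp (-ψ x) = 1) {η : ℝ} (hη : 0 < η) :
    ∃ C : ℝ, ∀ x ≤ C, (∫ u in Set.Iic x, Real.exp (-ψ u)) ≤ η := by
  set f : ℝ → ℝ := fun x => Real.exp (-ψ x) with hf_def
  have hf : Integrable f := f_integrable hdens
  have hfc := f_cont hconv
  have key : Tendsto (fun n : ℕ => ∫ u in Set.Iic (-(n:ℝ)), f u) atTop (𝓝 0) := by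
    have h0 : (0:ℝ) = ∫ v : ℝ, (0:ℝ) := by rw [integral_zero]
    rw [h0]
    have heq : ∀ n : ℕ, (∫ u in Set.Iic (-(n:ℝ)), f u)
        = ∫ u, (Set.Iic (-(n:ℝ))).indicator f u := fun n =>
      (integral_indicator measurableSet_Iic).symm
    simp_rw [heq]
    apply tendsto_integral_of_dominated_convergence (bound := f)
    · intro n
      exact (hfc.aestronglyMeasurable).indicator measurableSet_Iic
    · exact hf
    · intro n
      apply Filter.Eventually.of_forall
      intro v
      rw [Real.norm_eq_abs, abs_of_nonneg
        (Set.indicator_nonneg (fun _ _ => (Real.exp_pos _).le) v)]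
      by_cases h : v ∈ Set.Iic (-(n:ℝ))
      · rw [Set.indicator_of_mem h]
      · rw [Set.indicator_of_notMem h]
        exact (Real.exp_pos _).le
    · apply Filter.Eventually.of_forall
      intro v
      have hev : ∀ᶠ n : ℕ in atTop, (Set.Iic (-(n:ℝ))).indicator f v = 0 := by
        filter_upwards [tendsto_natCast_atTop_atTop.eventually_gt_atTop (-v)] with n hn
        apply Set.indicator_of_notMem
        simp only [Set.mem_Iic, not_le]
        linarith
      exact tendsto_const_nhds.congr' (hev.mono fun n h => h.symm)
  obtain ⟨n, hn⟩ := (key.eventually_le_const hη).exists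
  refine ⟨-(n:ℝ), fun x hx => ?_⟩
  refine le_trans ?_ hn
  apply setIntegral_mono_set hf.integrableOn
    (Filter.Eventually.of_forall fun v => (Real.exp_pos _).le)
  exact Filter.Eventually.of_forall fun v hv => le_trans hv hx

lemma Hc_tail {ψ : ℝ → ℝ} {ε : ℝ} (hconv : ConvexOn ℝ Set.univ ψ)
    (hdens : ∫ x, Real.exp (-ψ x) = 1) :
    ∃ C η : ℝ, 0 < η ∧ ∀ c ≥ C, η ≤ Hc ψ ε c := by
  set f : ℝ → ℝ := fun x => Real.exp (-ψ x) with hf_def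
  have hf : Integrable f := f_integrable hdens
  have hfc := f_cont hconv
  set κ : ℝ := ∫ v in (0:ℝ)..1, f v with hκ_def
  have hκ : 0 < κ := by
    apply intervalIntegral.intervalIntegral_pos_of_pos (f := f)
    · exact hf.intervalIntegrable
    · intro x; exact Real.exp_pos _
    · norm_num
  obtain ⟨C₀, hC₀⟩ := Iic_small hconv hdens
    (show (0:ℝ) < κ / (2 * Real.exp ε) by positivity)
  refine ⟨1 - C₀, κ / 2, by positivity, fun c hc => ?_⟩
  set g : ℝ → ℝ := fun v => f (v + c) - Real.exp ε * f v with hg_def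
  have hfa : Integrable (fun v => f (v + c)) := hf.comp_add_right c
  have hgint : Integrable g := hfa.sub (hf.const_mul (Real.exp ε))
  have hmax : Integrable (fun v => max (g v) 0) := hgint.pos_part
  have hcc : -c ≤ 1 - c := by linarith
  have step1 : (∫ v in Set.Ioc (-c) (1 - c), max (g v) 0) ≤ Hc ψ ε c :=
    setIntegral_le_integral hmax (Filter.Eventually.of_forall fun v => le_max_right _ _)
  have step2 : (∫ v in Set.Ioc (-c) (1 - c), g v)
      ≤ ∫ v in Set.Ioc (-c) (1 - c), max (g v) 0 :=
    setIntegral_mono hgint.integrableOn hmax.integrableOn fun v => le_max_left _ _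
  have step3 : (∫ v in Set.Ioc (-c) (1 - c), g v) = ∫ v in (-c)..(1 - c), g v :=
    (intervalIntegral.integral_of_le hcc).symm
  have step4 : (∫ v in (-c)..(1 - c), g v)
      = (∫ v in (-c)..(1 - c), f (v + c)) - Real.exp ε * ∫ v in (-c)..(1 - c), f v := by
    rw [hg_def]
    rw [intervalIntegral.integral_sub (hfa.intervalIntegrable)
      ((hf.const_mul (Real.exp ε)).intervalIntegrable),
      intervalIntegral.integral_const_mul]
  have step5 : (∫ v in (-c)..(1 - c), f (v + c)) = κ := by
    rw [intervalIntegral.integral_comp_add_right f c]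
    have e1 : -c + c = 0 := by ring
    have e2 : 1 - c + c = 1 := by ring
    rw [e1, e2]
  have step6 : (∫ v in (-c)..(1 - c), f v) ≤ κ / (2 * Real.exp ε) := by
    refine le_trans ?_ (hC₀ (1 - c) (by linarith))
    rw [intervalIntegral.integral_of_le hcc]
    apply setIntegral_mono_set hf.integrableOn
      (Filter.Eventually.of_forall fun v => (Real.exp_pos _).le)
    exact Filter.Eventually.of_forall fun v hv => hv.2
  have hK : 0 < Real.exp ε := Real.exp_pos _
  have step7 : Real.exp ε * (∫ v in (-c)..(1 - c), f v) ≤ κ / 2 := by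
    calc Real.exp ε * (∫ v in (-c)..(1 - c), f v)
        ≤ Real.exp ε * (κ / (2 * Real.exp ε)) := by
          exact mul_le_mul_of_nonneg_left step6 hK.le
      _ = κ / 2 := by field_simp
  linarith [step1, step2, step3 ▸ step2, step4]

lemma Hc_unif {ψ : ℝ → ℝ} {ε : ℝ} (hconv : ConvexOn ℝ Set.univ ψ)
    (heven : ∀ x, ψ (-x) = ψ x)
    (hmlr : ∀ Δ s : ℝ, 0 < Δ → 0 < s →
      Tendsto (fun z => ψ (z / s) - ψ ((z - Δ) / s)) atTop atTop)
    (hdens : ∫ x, Real.exp (-ψ x) = 1) {c₀ : ℝ} (hc₀ : 0 < c₀) :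
    ∃ η : ℝ, 0 < η ∧ ∀ c ≥ c₀, η ≤ Hc ψ ε c := by
  obtain ⟨C, η₁, hη₁, htail⟩ := Hc_tail (ε := ε) hconv hdens
  set C' : ℝ := max C c₀ with hC'_def
  have hc₀C' : c₀ ≤ C' := le_max_right _ _
  have hcompact : IsCompact (Set.Icc c₀ C') := isCompact_Icc
  have hcont : ContinuousOn (Hc ψ ε) (Set.Icc c₀ C') := by
    intro x hx
    exact (Hc_contAt hconv heven hdens (lt_of_lt_of_le hc₀ hx.1)).continuousWithinAt
  obtain ⟨x₀, hx₀mem, hx₀min⟩ := hcompact.exists_isMinOn (Set.nonempty_Icc.mpr hc₀C') hcont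
  have hx₀pos : 0 < Hc ψ ε x₀ :=
    Hc_pos hconv heven hmlr hdens (lt_of_lt_of_le hc₀ hx₀mem.1)
  refine ⟨min η₁ (Hc ψ ε x₀), lt_min hη₁ hx₀pos, fun c hc => ?_⟩
  rcases le_or_gt c C' with h | h
  · exact le_trans (min_le_right _ _) (hx₀min ⟨hc, h⟩)
  · exact le_trans (min_le_left _ _) (htail c (le_trans (le_max_left _ _) h.le))

lemma lub_exists {ψ : ℝ → ℝ} {ε Δ s : ℝ} (hconv : ConvexOn ℝ Set.univ ψ)
    (heven : ∀ x, ψ (-x) = ψ x)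
    (hmlr : ∀ Δ s : ℝ, 0 < Δ → 0 < s →
      Tendsto (fun z => ψ (z / s) - ψ ((z - Δ) / s)) atTop atTop)
    (hε : 0 ≤ ε) (hΔ : 0 < Δ) (hs : 0 < s) :
    IsLUB {z : ℝ | ψ (z / s) - ψ ((z - Δ) / s) ≤ ε}
      (sSup {z : ℝ | ψ (z / s) - ψ ((z - Δ) / s) ≤ ε}) := by
  apply isLUB_csSup
  · refine ⟨0, ?_⟩
    simp only [Set.mem_setOf_eq, zero_div, zero_sub, neg_div]
    have h1 : ψ 0 ≤ ψ (-(Δ / s)) := psi_zero_min hconv heven _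
    linarith
  · obtain ⟨z₀, hz₀⟩ := Filter.eventually_atTop.mp
      ((hmlr Δ s hΔ hs).eventually_ge_atTop (ε + 1))
    refine ⟨z₀, fun a ha => ?_⟩
    by_contra hza
    push_neg at hza
    have := hz₀ a hza.le
    simp only [Set.mem_setOf_eq] at ha
    linarith

/-- For an MLR-unbounded convex even `ψ` with density `f = e^{−ψ}` supported
everywhere, the minimal scale achieving `(ε, δ)`-differential privacy tends to
infinity as `δ → 0⁺`. -/
theorem scale_blows_up (ψ : ℝ → ℝ) (hconv : ConvexOn ℝ Set.univ ψ)
    (heven : ∀ x, ψ (-x) = ψ x)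
    (hmlr : ∀ Δ s : ℝ, 0 < Δ → 0 < s →
      Tendsto (fun z => ψ (z / s) - ψ ((z - Δ) / s)) atTop atTop)
    (hdens : ∫ x, Real.exp (-ψ x) = 1)
    (ε Δ : ℝ) (hε : 0 ≤ ε) (hΔ : 0 < Δ) :
    Tendsto
      (fun δ => sInf {s : ℝ | 0 < s ∧ ∀ t : ℝ,
        IsLUB {z : ℝ | ψ (z / s) - ψ ((z - Δ) / s) ≤ ε} t →
        (∫ u in Set.Iic ((Δ - t) / s), Real.exp (-ψ u)) -
            Real.exp ε * (∫ u in Set.Iic (-t / s), Real.exp (-ψ u)) ≤ δ})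
      (nhdsWithin 0 (Set.Ioi (0:ℝ))) atTop := by
  rw [tendsto_atTop]
  intro b
  set M : ℝ := max b 1 with hM_def
  have hM : 0 < M := lt_of_lt_of_le one_pos (le_max_right _ _)
  obtain ⟨η, hη, hunif⟩ := Hc_unif (ε := ε) hconv heven hmlr hdens
    (show (0:ℝ) < Δ / M by positivity)
  have hmem : Set.Ioo (0:ℝ) η ∈ nhdsWithin 0 (Set.Ioi (0:ℝ)) :=
    Ioo_mem_nhdsGT_of_mem ⟨le_refl 0, hη⟩
  filter_upwards [hmem] with δ hδ
  have hδ0 : 0 < δ := hδ.1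
  have hδη : δ < η := hδ.2
  -- Nonemptiness of the feasible set
  obtain ⟨c, hc, hHc⟩ := Hc_small hconv heven hdens hε hδ0
  have hsc : (0:ℝ) < Δ / c := by positivity
  have hdc : Δ / (Δ / c) = c := by
    field_simp
  have hne : (Δ / c) ∈ {s : ℝ | 0 < s ∧ ∀ t : ℝ,
      IsLUB {z : ℝ | ψ (z / s) - ψ ((z - Δ) / s) ≤ ε} t →
      (∫ u in Set.Iic ((Δ - t) / s), Real.exp (-ψ u)) -
          Real.exp ε * (∫ u in Set.Iic (-t / s), Real.exp (-ψ u)) ≤ δ} := by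
    refine ⟨hsc, fun t ht => ?_⟩
    rw [key_identity hconv heven hdens hΔ hsc ht]
    have : (∫ v, max (Real.exp (-ψ (v + Δ / (Δ / c))) -
        Real.exp ε * Real.exp (-ψ v)) 0) = Hc ψ ε c := by
      rw [hdc]; rfl
    rw [this]
    exact hHc
  apply le_csInf ⟨_, hne⟩
  intro x hx
  obtain ⟨hx0, hxle⟩ := hx
  by_contra hbx
  push_neg at hbx
  have hxM : x ≤ M := le_trans hbx.le (le_max_left _ _)
  have hcx : Δ / M ≤ Δ / x := by
    apply div_le_div_of_nonneg_left hΔ.le hx0 hxM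
  have hlb := hunif (Δ / x) hcx
  have hlub := lub_exists (ε := ε) (Δ := Δ) (s := x) hconv heven hmlr hε hΔ hx0
  have hkey := key_identity (ε := ε) hconv heven hdens hΔ hx0 hlub
  have happ := hxle _ hlub
  rw [hkey] at happ
  have : Hc ψ ε (Δ / x) ≤ δ := happ
  linarith
end

section
/- Key reduction for the multidimensional case: let f be a log-concave even one-dimensional density, nonincreasing on [0, ∞), ‖·‖ a norm on ℝⁿ, d > 0, ε ≥ 0. Then for x ∈ ℝⁿ: f(‖x − v‖) ≤ e^ε f(‖x‖) holds for all v with ‖v‖ = d if and only if f(‖x‖ − d) ≤ e^ε f(‖x‖). -/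
/-- Key reduction for the multidimensional case: for a log-concave even
density `f`, nonincreasing on `[0, ∞)`, a norm `‖·‖`, `d > 0` and `ε ≥ 0`:
`f(‖x − v‖) ≤ e^ε f(‖x‖)` holds for every `v` with `‖v‖ = d` iff
`f(‖x‖ − d) ≤ e^ε f(‖x‖)`. -/
theorem sphere_reduction {E : Type*} [NormedAddCommGroup E] [NormedSpace ℝ E]
    (f : ℝ → ℝ) (hpos : ∀ x, 0 ≤ f x) (heven : ∀ x, f (-x) = f x)
    (hlc : ∀ x y t : ℝ, t ∈ Set.Icc (0:ℝ) 1 →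
      f x ^ t * f y ^ (1 - t) ≤ f (t * x + (1 - t) * y))
    (hanti : AntitoneOn f (Set.Ici 0))
    (hint : ∫ x, f x = 1)
    (d ε : ℝ) (hd : 0 < d) (hε : 0 ≤ ε) (x : E) :
    (∀ v : E, ‖v‖ = d → f ‖x - v‖ ≤ Real.exp ε * f ‖x‖) ↔
      f (‖x‖ - d) ≤ Real.exp ε * f ‖x‖ := by
  have hexp : (1:ℝ) ≤ Real.exp ε := Real.one_le_exp hε
  constructor
  · intro h
    rcases eq_or_ne x 0 with hx | hx
    · subst hx
      simp only [norm_zero, zero_sub]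
      rw [heven]
      calc f d ≤ f 0 := hanti (Set.mem_Ici.2 le_rfl) (Set.mem_Ici.2 hd.le) hd.le
        _ ≤ Real.exp ε * f 0 := le_mul_of_one_le_left (hpos 0) hexp
    · have hxn : (0:ℝ) < ‖x‖ := norm_pos_iff.2 hx
      have hv : ‖(d / ‖x‖) • x‖ = d := by
        rw [norm_smul, Real.norm_eq_abs, abs_of_nonneg (by positivity)]
        field_simp
      have key := h _ hv
      have heq : ‖x - (d / ‖x‖) • x‖ = |‖x‖ - d| := by
        have : x - (d / ‖x‖) • x = (1 - d / ‖x‖) • x := by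
          rw [sub_smul, one_smul]
        rw [this, norm_smul, Real.norm_eq_abs, ← abs_of_pos hxn, ← abs_mul]
        congr 1
        field_simp
        rw [abs_of_pos hxn]; ring
      rw [heq] at key
      rcases abs_choice (‖x‖ - d) with h1 | h1
      · rwa [h1] at key
      · rw [h1] at key; rwa [heven] at key
  · intro h v hv
    have h1 : ‖x‖ - d ≤ ‖x - v‖ := by
      have := norm_sub_norm_le x v
      rw [hv] at this; linarith [le_abs_self (‖x‖ - ‖v‖), hv ▸ this]
    have h2 : d - ‖x‖ ≤ ‖x - v‖ := by
      have := norm_sub_norm_le v x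
      rw [hv, ← norm_neg (v - x), neg_sub] at this
      linarith [le_abs_self (d - ‖x‖)]
    rcases le_or_gt 0 (‖x‖ - d) with hc | hc
    · calc f ‖x - v‖ ≤ f (‖x‖ - d) :=
          hanti (Set.mem_Ici.2 hc) (Set.mem_Ici.2 (hc.trans h1)) h1
        _ ≤ Real.exp ε * f ‖x‖ := h
    · have hc' : 0 ≤ d - ‖x‖ := by linarith
      calc f ‖x - v‖ ≤ f (d - ‖x‖) :=
          hanti (Set.mem_Ici.2 hc') (Set.mem_Ici.2 (hc'.trans h2)) h2
        _ = f (‖x‖ - d) := by rw [← heven]; ring_nf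
        _ ≤ Real.exp ε * f ‖x‖ := h
end
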